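/- arXiv:1604.00622 — 7 statements merged into one kernel-verified Lean document; each statement's English description precedes it below -/
import Mathlib

section
/- In particular for n=0: B_m^{(-l)} = \sum_{j=0}^{\min(l,m)} (j!)^2 {l+1 choose_2 j+1} {m+1 choose_2 j+1} for all nonnegative integers l, m. -/
open PowerSeries Finset

/-- Unsigned Stirling numbers of the first kind. -/
def stirling1 : ℕ → ℕ → ℕ
  | 0, 0 => 1
  | 0, _ + 1 => 0
  | _ + 1, 0 => 0
  | n + 1, m + 1 => stirling1 n m + n * stirling1 n (m + 1)

/-- Stirling numbers of the second kind. -/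
def stirling2 : ℕ → ℕ → ℕ
  | 0, 0 => 1
  | 0, _ + 1 => 0
  | _ + 1, 0 => 0
  | n + 1, m + 1 => stirling2 n m + (m + 1) * stirling2 n (m + 1)

@[simp] lemma stirling2_zero_zero : stirling2 0 0 = 1 := rfl
@[simp] lemma stirling2_zero_succ (k : ℕ) : stirling2 0 (k+1) = 0 := rfl
@[simp] lemma stirling2_succ_zero (n : ℕ) : stirling2 (n+1) 0 = 0 := rfl
lemma stirling2_succ_succ (n k : ℕ) :
    stirling2 (n+1) (k+1) = stirling2 n k + (k+1) * stirling2 n (k+1) := rfl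

lemma stirling2_eq_zero_of_lt : ∀ {n k : ℕ}, n < k → stirling2 n k = 0 := by
  intro n
  induction n with
  | zero =>
    intro k h
    match k, h with
    | k+1, _ => rfl
  | succ n ih =>
    intro k h
    match k, h with
    | k+1, h =>
      rw [stirling2_succ_succ, ih (by omega), ih (by omega)]
      simp

lemma choose_rec (μ j : ℕ) :
    (μ+1) * μ.choose j = (j+1) * μ.choose (j+1) + (j+1) * μ.choose j := by
  rcases le_or_gt j μ with h | h
  · have h1 : μ.choose (j+1) * (j+1) = μ.choose j * (μ - j) := Nat.choose_succ_right_eq μ j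
    have h2 : μ - j + j = μ := Nat.sub_add_cancel h
    calc (μ+1) * μ.choose j = μ.choose j * ((μ - j + j) + 1) := by rw [h2]; ring
      _ = μ.choose j * (μ - j) + (j+1) * μ.choose j := by ring
      _ = (j+1) * μ.choose (j+1) + (j+1) * μ.choose j := by rw [← h1]; ring
  · rw [Nat.choose_eq_zero_of_lt h, Nat.choose_eq_zero_of_lt (by omega)]
    simp

lemma choose_rec2 (ν j : ℕ) :
    (ν+1) * (ν+1).choose (j+1)
      = ν * ν.choose (j+1) + (j+2) * ν.choose (j+1) + (j+1) * ν.choose j := by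
  rw [Nat.choose_succ_succ, mul_add, choose_rec]
  ring

-- Lemma (A)
lemma pow_eq_sum_stirling2 (μ : ℕ) : ∀ l : ℕ,
    ((μ:ℚ)+1)^l = ∑ j ∈ range (l+1),
      (stirling2 (l+1) (j+1) : ℚ) * j.factorial * μ.choose j := by
  intro l
  induction l with
  | zero => simp [stirling2_succ_succ]
  | succ l ih =>
    rw [pow_succ, ih, Finset.sum_mul]
    have hterm : ∀ j ∈ range (l+1),
        (stirling2 (l+1) (j+1) : ℚ) * j.factorial * μ.choose j * ((μ:ℚ)+1)
        = (stirling2 (l+1) (j+1) : ℚ) * (j+1).factorial * μ.choose (j+1)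
          + (stirling2 (l+1) (j+1) : ℚ) * ((j+1) * j.factorial) * μ.choose j := by
      intro j _
      have hq : ((μ:ℚ)+1) * μ.choose j
          = (j+1) * μ.choose (j+1) + (j+1) * μ.choose j := by
        exact_mod_cast congrArg (Nat.cast : ℕ → ℚ) (choose_rec μ j)
      rw [Nat.factorial_succ]
      push_cast
      linear_combination ((stirling2 (l + 1) (j + 1) : ℚ) * j.factorial) * hq
    rw [Finset.sum_congr rfl hterm, Finset.sum_add_distrib]
    have htar : ∀ j ∈ range (l+2),
        (stirling2 (l+2) (j+1) : ℚ) * j.factorial * μ.choose j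
        = (stirling2 (l+1) j : ℚ) * j.factorial * μ.choose j
          + (stirling2 (l+1) (j+1) : ℚ) * ((j+1) * j.factorial) * μ.choose j := by
      intro j _
      rw [stirling2_succ_succ]
      push_cast
      ring
    rw [Finset.sum_congr rfl htar, Finset.sum_add_distrib]
    congr 1
    · rw [Finset.sum_range_succ' (fun j => (stirling2 (l+1) j : ℚ) * j.factorial * μ.choose j) (l+1)]
      simp [Nat.factorial_succ]
    · rw [Finset.sum_range_succ (fun j => (stirling2 (l+1) (j+1) : ℚ) * ((j+1) * j.factorial) * μ.choose j) (l+1)]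
      rw [stirling2_eq_zero_of_lt (by omega : l+1 < l+2)]
      simp

-- Lemma (B)
lemma alt_sum_stirling2 (m : ℕ) : ∀ j : ℕ,
    ∑ μ ∈ range (m+1), (-1:ℚ)^(m+μ) * μ.factorial * stirling2 m μ * μ.choose j
      = j.factorial * stirling2 (m+1) (j+1) := by
  induction m with
  | zero =>
    intro j
    cases j with
    | zero => simp [stirling2_succ_succ]
    | succ j =>
      simp [stirling2_succ_succ, stirling2_eq_zero_of_lt (by omega : (0:ℕ) < j+1),
        Nat.choose_eq_zero_of_lt (by omega : (0:ℕ) < j+1)]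
  | succ m ih =>
    have key : ∀ j : ℕ,
        (∑ μ ∈ range (m+2), (-1:ℚ)^(m+1+μ) * μ.factorial * stirling2 (m+1) μ * μ.choose j)
        = ∑ ν ∈ range (m+1), (-1:ℚ)^(m+ν) * ν.factorial * stirling2 m ν *
            (((ν:ℚ)+1) * (ν+1).choose j - (ν:ℚ) * ν.choose j) := by
      intro j
      set G : ℕ → ℚ := fun μ => -((-1:ℚ)^(m+μ) * μ.factorial * stirling2 m μ * μ.choose j * μ) with hG
      rw [Finset.sum_range_succ' (fun μ => (-1:ℚ)^(m+1+μ) * μ.factorial * stirling2 (m+1) μ * μ.choose j) (m+1)]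
      simp only [stirling2_succ_zero, Nat.cast_zero, mul_zero, zero_mul, add_zero]
      have hsplit : ∀ k ∈ range (m+1),
          (-1:ℚ)^(m+1+(k+1)) * (k+1).factorial * stirling2 (m+1) (k+1) * (k+1).choose j
          = (-1:ℚ)^(m+k) * k.factorial * stirling2 m k * (((k:ℚ)+1) * (k+1).choose j)
            + G (k+1) := by
        intro k _
        rw [hG, stirling2_succ_succ]
        simp only [Nat.factorial_succ]
        push_cast
        have hp : (-1:ℚ)^(m+1+(k+1)) = (-1:ℚ)^(m+k) := by
          rw [show m+1+(k+1) = (m+k)+2 by ring, pow_add]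
          norm_num
        have hp2 : (-1:ℚ)^(m+(k+1)) = -(-1:ℚ)^(m+k) := by
          rw [show m+(k+1) = (m+k)+1 by ring, pow_succ]
          ring
        rw [hp, hp2]
        ring
      rw [Finset.sum_congr rfl hsplit, Finset.sum_add_distrib]
      have hGsum : ∑ k ∈ range (m+1), G (k+1) = ∑ ν ∈ range (m+1), G ν := by
        have h2 := Finset.sum_range_succ' G (m+1)
        have h3 := Finset.sum_range_succ G (m+1)
        have hG0 : G 0 = 0 := by simp [hG]
        have hGm : G (m+1) = 0 := by
          simp [hG, stirling2_eq_zero_of_lt (by omega : m < m+1)]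
        rw [hG0, add_zero] at h2
        rw [hGm, add_zero] at h3
        rw [← h2, h3]
      rw [hGsum, ← Finset.sum_add_distrib]
      refine Finset.sum_congr rfl fun ν _ => ?_
      rw [hG]
      ring
    intro j
    cases j with
    | zero =>
      rw [key 0]
      have : ∀ ν ∈ range (m+1),
          (-1:ℚ)^(m+ν) * ν.factorial * stirling2 m ν *
            (((ν:ℚ)+1) * ((ν+1).choose 0 : ℚ) - (ν:ℚ) * (ν.choose 0 : ℚ))
          = (-1:ℚ)^(m+ν) * ν.factorial * stirling2 m ν * (ν.choose 0 : ℚ) := by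
        intro ν _
        simp
      rw [Finset.sum_congr rfl this, ih 0, stirling2_succ_succ (m+1) 0]
      push_cast
      simp
    | succ j =>
      rw [key (j+1)]
      have hterm : ∀ ν ∈ range (m+1),
          (-1:ℚ)^(m+ν) * ν.factorial * stirling2 m ν *
            (((ν:ℚ)+1) * (ν+1).choose (j+1) - (ν:ℚ) * ν.choose (j+1))
          = ((j:ℚ)+2) * ((-1:ℚ)^(m+ν) * ν.factorial * stirling2 m ν * (ν.choose (j+1) : ℚ))
            + ((j:ℚ)+1) * ((-1:ℚ)^(m+ν) * ν.factorial * stirling2 m ν * (ν.choose j : ℚ)) := by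
        intro ν _
        have hq : ((ν:ℚ)+1) * (ν+1).choose (j+1)
            = (ν:ℚ) * ν.choose (j+1) + ((j:ℚ)+2) * ν.choose (j+1) + ((j:ℚ)+1) * ν.choose j := by
          exact_mod_cast congrArg (Nat.cast : ℕ → ℚ) (choose_rec2 ν j)
        linear_combination ((-1:ℚ)^(m+ν) * ν.factorial * (stirling2 m ν : ℚ)) * hq
      rw [Finset.sum_congr rfl hterm, Finset.sum_add_distrib, ← Finset.mul_sum, ← Finset.mul_sum,
        ih (j+1), ih j, stirling2_succ_succ (m+1) (j+1), Nat.factorial_succ]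
      push_cast
      ring
/-- e^t as a formal power series over ℚ. -/
noncomputable def expQ : PowerSeries ℚ := PowerSeries.exp ℚ

/-- e^{-t} as a formal power series over ℚ. -/
noncomputable def expNegQ : PowerSeries ℚ := rescale (-1) expQ

/-- The formal power series Li_k(1-e^{-t})/(1-e^{-t}) = ∑_{m≥0} (m+1)^{-k} (1-e^{-t})^m,
  defined coefficientwise (the tail vanishes since (1-e^{-t})^m has order m). -/
noncomputable def liEGF (k : ℤ) : PowerSeries ℚ :=
  PowerSeries.mk fun j =>
    ∑ m ∈ range (j + 1), ((m : ℚ) + 1) ^ (-k) * coeff j ((1 - expNegQ) ^ m)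

/-- EGF of the poly-Bernoulli polynomials: e^{-xt} Li_k(1-e^{-t})/(1-e^{-t}). -/
noncomputable def pbEGF (k : ℤ) (x : ℚ) : PowerSeries ℚ := rescale (-x) expQ * liEGF k

/-- Poly-Bernoulli polynomial value B_m^{(k)}(x). -/
noncomputable def pbPoly (k : ℤ) (x : ℚ) (m : ℕ) : ℚ := m.factorial * coeff m (pbEGF k x)

/-- Poly-Bernoulli number B_m^{(k)}. -/
noncomputable def pbB (k : ℤ) (m : ℕ) : ℚ := pbPoly k 0 m

/-- Poly-Bernoulli number C_m^{(k)}. -/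
noncomputable def pbC (k : ℤ) (m : ℕ) : ℚ := pbPoly k 1 m

/-- 𝓑_m^{(-l)}(n) = ∑_{j=0}^n [n j] B_m^{(-l-j)}(n). -/
noncomputable def scrB (l m n : ℕ) : ℚ :=
  ∑ j ∈ range (n + 1), (stirling1 n j : ℚ) * pbPoly (-(l : ℤ) - j) n m


lemma coeff_expNegQ (n : ℕ) : coeff n expNegQ = (-1)^n / n.factorial := by
  simp [expNegQ, expQ, coeff_rescale, coeff_exp]
  ring

lemma stirling2_zero_right' (n : ℕ) : (stirling2 n 0 : ℚ) = if n = 0 then 1 else 0 := by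
  cases n with
  | zero => simp
  | succ n => simp

lemma stirling2_succ_succ_eq_sum (n : ℕ) : ∀ μ : ℕ,
    stirling2 (n+1) (μ+1) = ∑ i ∈ range (n+1), n.choose i * stirling2 i μ := by
  induction n with
  | zero => intro μ; cases μ <;> simp [stirling2_succ_succ]
  | succ n ih =>
    intro μ
    have key : ∑ i ∈ range (n+2), (n+1).choose i * stirling2 i μ
        = (∑ i ∈ range (n+1), n.choose i * stirling2 (i+1) μ) + stirling2 (n+1) (μ+1) := by
      rw [Finset.sum_range_succ' (fun i => (n+1).choose i * stirling2 i μ) (n+1)]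
      have h1 : ∀ i ∈ range (n+1), (n+1).choose (i+1) * stirling2 (i+1) μ
          = n.choose i * stirling2 (i+1) μ + n.choose (i+1) * stirling2 (i+1) μ := by
        intro i _; rw [Nat.choose_succ_succ, add_mul]
      rw [Finset.sum_congr rfl h1, Finset.sum_add_distrib, ih μ]
      have h2 : (∑ i ∈ range (n+1), n.choose (i+1) * stirling2 (i+1) μ)
          + (n+1).choose 0 * stirling2 0 μ
          = ∑ i ∈ range (n+2), n.choose i * stirling2 i μ := by
        rw [Finset.sum_range_succ' (fun i => n.choose i * stirling2 i μ) (n+1)]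
        simp
      have h3 : ∑ i ∈ range (n+2), n.choose i * stirling2 i μ
          = ∑ i ∈ range (n+1), n.choose i * stirling2 i μ := by
        rw [Finset.sum_range_succ, Nat.choose_succ_self, zero_mul, add_zero]
      omega
    rw [key]
    cases μ with
    | zero =>
      have : ∀ i ∈ range (n+1), n.choose i * stirling2 (i+1) 0 = 0 := by
        intro i _; simp
      rw [Finset.sum_congr rfl this, Finset.sum_const_zero, zero_add,
        stirling2_succ_succ]
      simp
    | succ ν =>
      have : ∀ i ∈ range (n+1), n.choose i * stirling2 (i+1) (ν+1)
          = n.choose i * stirling2 i ν + (ν+1) * (n.choose i * stirling2 i (ν+1)) := by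
        intro i _; rw [stirling2_succ_succ]; ring
      rw [Finset.sum_congr rfl this, Finset.sum_add_distrib, ← Finset.mul_sum,
        ← ih ν, ← ih (ν+1), stirling2_succ_succ (n+1) (ν+1), stirling2_succ_succ n (ν+1)]
      ring

lemma coeff_one_sub_expNegQ_pow (μ : ℕ) : ∀ n : ℕ,
    (coeff n ((1 - expNegQ) ^ μ) : ℚ)
      = (-1)^(n+μ) * μ.factorial * stirling2 n μ / n.factorial := by
  induction μ with
  | zero =>
    intro n
    rw [pow_zero, coeff_one, stirling2_zero_right']
    cases n with
    | zero => simp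
    | succ n => simp
  | succ μ ih =>
    intro n
    rw [pow_succ, mul_sub, mul_one, map_sub, coeff_mul]
    rw [Finset.Nat.sum_antidiagonal_eq_sum_range_succ_mk]
    have hterm : ∀ k ∈ range (n+1),
        coeff k ((1 - expNegQ)^μ) * coeff (n-k) expNegQ
        = (-1)^(n+μ) * μ.factorial / n.factorial * (n.choose k * stirling2 k μ) := by
      intro k hk
      rw [Finset.mem_range] at hk
      have hk' : k ≤ n := by omega
      rw [ih k, coeff_expNegQ]
      have hpow : ((-1:ℚ))^(k+μ) * (-1)^(n-k) = (-1)^(n+μ) := by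
        rw [← pow_add]
        congr 1
        omega
      have hfac : (n.choose k : ℚ) * k.factorial * (n-k).factorial = n.factorial := by
        rw [← Nat.cast_mul, ← Nat.cast_mul, Nat.choose_mul_factorial_mul_factorial hk']
      have h1 : (k.factorial : ℚ) ≠ 0 := Nat.cast_ne_zero.mpr k.factorial_ne_zero
      have h2 : ((n-k).factorial : ℚ) ≠ 0 := Nat.cast_ne_zero.mpr (n-k).factorial_ne_zero
      have h3 : (n.factorial : ℚ) ≠ 0 := Nat.cast_ne_zero.mpr n.factorial_ne_zero
      field_simp
      rw [← hpow]
      ring_nf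
      rw [← hfac]
      ring
    rw [Finset.sum_congr rfl hterm, ← Finset.mul_sum]
    rw [show ∑ k ∈ range (n+1), ((n.choose k : ℚ) * stirling2 k μ)
        = ((stirling2 (n+1) (μ+1) : ℕ) : ℚ) by
      rw [stirling2_succ_succ_eq_sum]; push_cast; ring]
    rw [ih n, stirling2_succ_succ n μ]
    have h3 : (n.factorial : ℚ) ≠ 0 := Nat.cast_ne_zero.mpr n.factorial_ne_zero
    push_cast [Nat.factorial_succ]
    field_simp
    ring

theorem pbB_eq_sum_stirling2 (l m : ℕ) :
    pbB (-(l : ℤ)) m =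
      ∑ j ∈ range (min l m + 1),
        (j.factorial : ℚ) ^ 2 * (stirling2 (l + 1) (j + 1) : ℚ) *
          (stirling2 (m + 1) (j + 1) : ℚ) := by
  have h0 : pbB (-(l : ℤ)) m
      = ∑ μ ∈ range (m+1), (-1:ℚ)^(m+μ) * μ.factorial * stirling2 m μ * ((μ:ℚ)+1)^l := by
    rw [pbB, pbPoly, pbEGF, neg_zero, rescale_zero]
    simp only [RingHom.coe_comp, Function.comp_apply, constantCoeff_exp, expQ, map_one, one_mul]
    rw [liEGF, coeff_mk, Finset.mul_sum]
    refine Finset.sum_congr rfl fun μ _ => ?_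
    rw [coeff_one_sub_expNegQ_pow, neg_neg, zpow_natCast]
    have h3 : (m.factorial : ℚ) ≠ 0 := Nat.cast_ne_zero.mpr m.factorial_ne_zero
    field_simp
  rw [h0]
  have h1 : ∀ μ ∈ range (m+1),
      (-1:ℚ)^(m+μ) * μ.factorial * stirling2 m μ * ((μ:ℚ)+1)^l
      = ∑ j ∈ range (l+1), (stirling2 (l+1) (j+1) : ℚ) * j.factorial *
          ((-1:ℚ)^(m+μ) * μ.factorial * stirling2 m μ * μ.choose j) := by
    intro μ _
    rw [pow_eq_sum_stirling2 μ l, Finset.mul_sum]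
    refine Finset.sum_congr rfl fun j _ => ?_
    ring
  rw [Finset.sum_congr rfl h1, Finset.sum_comm]
  have h2 : ∀ j ∈ range (l+1),
      (∑ μ ∈ range (m+1), (stirling2 (l+1) (j+1) : ℚ) * j.factorial *
          ((-1:ℚ)^(m+μ) * μ.factorial * stirling2 m μ * μ.choose j))
      = (j.factorial : ℚ)^2 * stirling2 (l+1) (j+1) * stirling2 (m+1) (j+1) := by
    intro j _
    rw [← Finset.mul_sum, alt_sum_stirling2 m j]
    ring
  rw [Finset.sum_congr rfl h2]
  symm
  apply Finset.sum_subset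
  · exact Finset.range_subset_range.mpr (by omega)
  · intro j hj hj2
    rw [Finset.mem_range] at hj hj2
    rw [stirling2_eq_zero_of_lt (show m+1 < j+1 by omega)]
    simp
end

section
/- The three-variable exponential generating function \sum_{l,m,n\ge 0} \mathscr{B}_m^{(-l)}(n) x^l y^m z^n/(l! m! n!) equals e^{x+y}/(e^x + e^y - e^{x+y} - z). -/
open PowerSeries Finset

/-- e^x, viewed in ℚ[[x]][[y]][[z]]. -/
noncomputable def eX3 : PowerSeries (PowerSeries (PowerSeries ℚ)) :=
  PowerSeries.C (PowerSeries.C expQ)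

/-- e^y, viewed in ℚ[[x]][[y]][[z]]. -/
noncomputable def eY3 : PowerSeries (PowerSeries (PowerSeries ℚ)) :=
  PowerSeries.C (PowerSeries.exp (PowerSeries ℚ))

namespace Scr

noncomputable def cc (a : ℚ) (m i : ℕ) : ℚ :=
  coeff m (rescale a expQ * (1 - expNegQ) ^ i)

noncomputable def rr (n i : ℕ) : ℚ := (n + i).factorial / i.factorial

noncomputable def PP (n m : ℕ) : PowerSeries ℚ :=
  ∑ i ∈ range (m + 1), (rr n i * cc (-(n : ℚ)) m i) • expQ ^ (i + 1)

lemma X_dvd_one_sub_expNegQ : (PowerSeries.X : PowerSeries ℚ) ∣ (1 - expNegQ) := by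
  rw [PowerSeries.X_dvd_iff]
  have : (constantCoeff) ((rescale (-1)) (expQ)) = 1 := by
    rw [← PowerSeries.coeff_zero_eq_constantCoeff_apply, PowerSeries.coeff_rescale]
    simp [expQ, PowerSeries.coeff_exp]
  simp [expNegQ, this]

lemma coeff_one_sub_pow_eq_zero {m i : ℕ} (h : m < i) :
    coeff m ((1 - expNegQ) ^ i) = 0 := by
  have : (PowerSeries.X : PowerSeries ℚ) ^ i ∣ (1 - expNegQ) ^ i :=
    pow_dvd_pow_of_dvd X_dvd_one_sub_expNegQ i
  exact (PowerSeries.X_pow_dvd_iff.mp this) m h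

lemma cc_eq_zero {a : ℚ} {m i : ℕ} (h : m < i) : cc a m i = 0 := by
  have : (PowerSeries.X : PowerSeries ℚ) ^ i ∣ rescale a expQ * (1 - expNegQ) ^ i :=
    Dvd.dvd.mul_left (pow_dvd_pow_of_dvd X_dvd_one_sub_expNegQ i) _
  exact (PowerSeries.X_pow_dvd_iff.mp this) m h

lemma rescale_mul (a b : ℚ) : rescale a expQ * rescale b expQ = rescale (a + b) expQ :=
  PowerSeries.exp_mul_exp_eq_exp_add a b

lemma cc_rec (a : ℚ) (m i : ℕ) : cc (a - 1) m i = cc a m i - cc a m (i + 1) := by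
  unfold cc
  have h1 : rescale (a - 1) expQ = rescale a expQ * expNegQ := by
    rw [expNegQ, rescale_mul]; ring_nf
  have : rescale (a - 1) expQ * (1 - expNegQ) ^ i
      = rescale a expQ * (1 - expNegQ) ^ i - rescale a expQ * (1 - expNegQ) ^ (i + 1) := by
    rw [h1, pow_succ]; ring
  rw [this, map_sub]

/-- convolution with exp-1 raises i by one, with a shift of a. -/
lemma cc_conv (a : ℚ) (m i : ℕ) :
    ∑ pq ∈ antidiagonal m, ((pq.2.factorial : ℚ)⁻¹ - if pq.2 = 0 then 1 else 0)
      * cc (a - 1) pq.1 i = cc a m (i + 1) := by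
  have key : (rescale (a - 1) expQ * (1 - expNegQ) ^ i) * (expQ - 1)
      = rescale a expQ * (1 - expNegQ) ^ (i + 1) := by
    have h1 : rescale (a - 1) expQ * (expQ - 1) = rescale a expQ * (1 - expNegQ) := by
      have e1 : rescale (a - 1) expQ * expQ = rescale a expQ := by
        have := rescale_mul (a - 1) 1
        simpa [expQ, PowerSeries.rescale_one] using this
      have e2 : rescale a expQ * expNegQ = rescale (a - 1) expQ := by
        rw [expNegQ, rescale_mul]; ring_nf
      rw [mul_sub, mul_sub, mul_one, mul_one, e1, e2]
    calc (rescale (a - 1) expQ * (1 - expNegQ) ^ i) * (expQ - 1)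
        = (rescale (a - 1) expQ * (expQ - 1)) * (1 - expNegQ) ^ i := by ring
      _ = rescale a expQ * (1 - expNegQ) ^ (i + 1) := by rw [h1, pow_succ]; ring
  have := congrArg (coeff m) key
  rw [PowerSeries.coeff_mul] at this
  unfold cc
  rw [← this]
  apply Finset.sum_congr rfl
  intro pq _
  rw [mul_comm]
  congr 1
  rw [map_sub, expQ, PowerSeries.coeff_exp, PowerSeries.coeff_one]
  simp [one_div]

lemma rr_zero (n : ℕ) : rr n 0 = n.factorial := by simp [rr]

lemma rr_succ (n i : ℕ) :
    rr (n + 1) (i + 1) = rr (n + 1) i + (n + 1) * rr n (i + 1) := by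
  unfold rr
  have h1 : (n + 1 + (i + 1)).factorial = (n + 1 + (i + 1)) * (n + 1 + i).factorial := by
    rw [show n + 1 + (i + 1) = (n + 1 + i) + 1 from rfl, Nat.factorial_succ]
  have h2 : (n + (i + 1)) = (n + 1 + i) := by ring
  rw [h1, h2]
  have hf : ((i + 1).factorial : ℚ) ≠ 0 := Nat.cast_ne_zero.mpr (Nat.factorial_ne_zero _)
  have hf2 : ((i).factorial : ℚ) ≠ 0 := Nat.cast_ne_zero.mpr (Nat.factorial_ne_zero _)
  rw [Nat.factorial_succ]
  field_simp
  push_cast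
  ring

lemma stirling1_eq_zero {n j : ℕ} (h : n < j) : stirling1 n j = 0 := by
  induction n generalizing j with
  | zero => cases j with
    | zero => omega
    | succ j => rfl
  | succ n ih =>
    cases j with
    | zero => omega
    | succ j =>
      show stirling1 n j + n * stirling1 n (j + 1) = 0
      rw [ih (by omega), ih (by omega)]
      simp

lemma stirling1_sum (n : ℕ) (w : ℚ) :
    ∑ j ∈ range (n + 1), (stirling1 n j : ℚ) * w ^ j
      = ∏ k ∈ range n, (w + k) := by
  induction n with
  | zero => simp [stirling1]
  | succ n ih =>
    rw [Finset.sum_range_succ', Finset.prod_range_succ]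
    have h0 : (stirling1 (n + 1) 0 : ℚ) * w ^ 0 = 0 := by
      show ((0 : ℕ) : ℚ) * w ^ 0 = 0
      simp
    rw [h0, add_zero]
    have hterm : ∀ j, (stirling1 (n + 1) (j + 1) : ℚ) * w ^ (j + 1)
        = (stirling1 n j : ℚ) * w ^ j * w + n * ((stirling1 n (j + 1) : ℚ) * w ^ (j + 1)) := by
      intro j
      show ((stirling1 n j + n * stirling1 n (j + 1) : ℕ) : ℚ) * w ^ (j + 1) = _
      push_cast
      ring
    rw [Finset.sum_congr rfl (fun j _ => hterm j), Finset.sum_add_distrib, ← Finset.sum_mul,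
      ← Finset.mul_sum, ih]
    have hshift : ∑ j ∈ range (n + 1), (stirling1 n (j + 1) : ℚ) * w ^ (j + 1)
        = ∑ j ∈ range (n + 1), (stirling1 n j : ℚ) * w ^ j - (stirling1 n 0 : ℚ) := by
      rw [Finset.sum_range_succ, stirling1_eq_zero (show n < n + 1 by omega),
        Finset.sum_range_succ' (fun j => (stirling1 n j : ℚ) * w ^ j) n]
      simp
    rw [hshift, ih]
    have hn0 : (n : ℚ) * (stirling1 n 0 : ℚ) = 0 := by
      cases n with
      | zero => simp
      | succ n => show _ * ((0:ℕ):ℚ) = 0; simp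
    ring_nf
    rw [hn0]
    ring

lemma rr_zero_left (i : ℕ) : rr 0 i = 1 := by
  simp [rr, div_self, Nat.cast_ne_zero.mpr (Nat.factorial_ne_zero i)]

lemma PP_ext {n a m : ℕ} (h : a ≤ m) :
    PP n a = ∑ i ∈ range (m + 1), (rr n i * cc (-(n : ℚ)) a i) • expQ ^ (i + 1) := by
  unfold PP
  apply Finset.sum_subset (Finset.range_subset_range.mpr (by omega))
  intro i _ hi
  rw [cc_eq_zero (show a < i by simp at hi; omega)]
  simp

lemma main (n m : ℕ) :
    PP n m - (expQ - 1) * ∑ pq ∈ antidiagonal m,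
        ((pq.2.factorial : ℚ)⁻¹ - if pq.2 = 0 then 1 else 0) • PP n pq.1
      = if n = 0 then (m.factorial : ℚ)⁻¹ • expQ else (n : ℚ) • PP (n - 1) m := by
  have hone : (1 : ℚ) - (n : ℚ) - 1 = -(n : ℚ) := by ring
  -- step 2 : the convolution sum
  have step2 : ∑ pq ∈ antidiagonal m,
      ((pq.2.factorial : ℚ)⁻¹ - if pq.2 = 0 then 1 else 0) • PP n pq.1
      = ∑ i ∈ range (m + 1), (rr n i * cc (1 - (n : ℚ)) m (i + 1)) • expQ ^ (i + 1) := by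
    have h1 : ∀ pq ∈ antidiagonal m,
        ((pq.2.factorial : ℚ)⁻¹ - if pq.2 = 0 then 1 else 0) • PP n pq.1
        = ∑ i ∈ range (m + 1),
            (((pq.2.factorial : ℚ)⁻¹ - if pq.2 = 0 then 1 else 0)
              * (rr n i * cc (-(n : ℚ)) pq.1 i)) • expQ ^ (i + 1) := by
      intro pq hpq
      rw [PP_ext (Finset.HasAntidiagonal.antidiagonal.fst_le hpq), Finset.smul_sum]
      apply Finset.sum_congr rfl
      intro i _
      rw [smul_smul]
    rw [Finset.sum_congr rfl h1, Finset.sum_comm]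
    apply Finset.sum_congr rfl
    intro i _
    rw [← Finset.sum_smul]
    congr 1
    have := cc_conv (1 - (n : ℚ)) m i
    rw [hone] at this
    rw [← this, Finset.mul_sum]
    apply Finset.sum_congr rfl
    intro pq _
    ring
  -- step 4 : rewrite PP n m via cc at 1 - n
  have step4 : PP n m = ∑ i ∈ range (m + 1),
      (rr n i * (cc (1 - (n : ℚ)) m i - cc (1 - (n : ℚ)) m (i + 1))) • expQ ^ (i + 1) := by
    unfold PP
    apply Finset.sum_congr rfl
    intro i _
    rw [← cc_rec, hone]
  rw [step2, step4]
  -- step 5 : expand the product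
  have step5 : (expQ - 1) * ∑ i ∈ range (m + 1),
      (rr n i * cc (1 - (n : ℚ)) m (i + 1)) • expQ ^ (i + 1)
      = (∑ i ∈ range (m + 1), (rr n i * cc (1 - (n : ℚ)) m (i + 1)) • expQ ^ (i + 2))
        - ∑ i ∈ range (m + 1), (rr n i * cc (1 - (n : ℚ)) m (i + 1)) • expQ ^ (i + 1) := by
    rw [Finset.mul_sum, ← Finset.sum_sub_distrib]
    apply Finset.sum_congr rfl
    intro i _
    rw [mul_smul_comm, sub_mul, one_mul, smul_sub, pow_succ]
    ring_nf
  rw [step5]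
  -- step 6 : reindex
  have step6 : ∑ i ∈ range (m + 1), (rr n i * cc (1 - (n : ℚ)) m (i + 1)) • expQ ^ (i + 2)
      = ∑ i ∈ range (m + 1),
          ((if i = 0 then 0 else rr n (i - 1) * cc (1 - (n : ℚ)) m i)) • expQ ^ (i + 1) := by
    set h : ℕ → PowerSeries ℚ := fun j =>
      ((if j = 0 then 0 else rr n (j - 1) * cc (1 - (n : ℚ)) m j)) • expQ ^ (j + 1) with hh
    have e1 : ∀ i, (rr n i * cc (1 - (n : ℚ)) m (i + 1)) • expQ ^ (i + 2) = h (i + 1) := by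
      intro i; simp [hh]
    rw [Finset.sum_congr rfl (fun i _ => e1 i)]
    have := Finset.sum_range_succ' h (m + 1)
    -- this : ∑ range (m+2) h = ∑ range (m+1) (h ∘ succ) + h 0
    have h0 : h 0 = 0 := by simp [hh]
    have hm1 : h (m + 1) = 0 := by
      simp only [hh, Nat.succ_ne_zero, if_false]
      rw [cc_eq_zero (by omega)]
      simp
    rw [Finset.sum_range_succ, hm1, add_zero] at this
    rw [h0, add_zero] at this
    exact this.symm
  rw [step6]
  rw [← Finset.sum_sub_distrib]
  have combine : ∀ i ∈ range (m + 1),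
      (rr n i * (cc (1 - (n : ℚ)) m i - cc (1 - (n : ℚ)) m (i + 1))) • expQ ^ (i + 1)
        - (((if i = 0 then 0 else rr n (i - 1) * cc (1 - (n : ℚ)) m i)) • expQ ^ (i + 1)
            - (rr n i * cc (1 - (n : ℚ)) m (i + 1)) • expQ ^ (i + 1))
      = ((rr n i - if i = 0 then 0 else rr n (i - 1)) * cc (1 - (n : ℚ)) m i)
          • expQ ^ (i + 1) := by
    intro i _
    rw [← sub_smul, ← sub_smul]
    congr 1
    split_ifs <;> ring
  rw [← Finset.sum_sub_distrib, Finset.sum_congr rfl combine]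
  -- final case split
  cases n with
  | zero =>
    simp only [if_pos rfl, Nat.cast_zero]
    have hterm : ∀ i ∈ range (m + 1),
        ((rr 0 i - if i = 0 then 0 else rr 0 (i - 1)) * cc (1 - (0 : ℚ)) m i)
          • expQ ^ (i + 1)
        = if i = 0 then cc 1 m 0 • expQ else 0 := by
      intro i _
      cases i with
      | zero =>
        simp only [if_pos rfl, rr_zero_left, sub_zero, one_mul, pow_one]
        norm_num
      | succ i =>
        simp only [Nat.succ_ne_zero, if_false, rr_zero_left, Nat.succ_sub_one, sub_self,
          zero_mul, zero_smul]
    rw [Finset.sum_congr rfl hterm, Finset.sum_ite_eq' (range (m + 1)) 0]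
    simp only [Finset.mem_range, Nat.lt_add_one_iff, Nat.zero_le, if_pos]
    have hcc : cc 1 m 0 = (m.factorial : ℚ)⁻¹ := by
      unfold cc
      rw [pow_zero, mul_one, PowerSeries.rescale_one]
      simp [expQ, PowerSeries.coeff_exp, one_div]
    rw [hcc]
  | succ n' =>
    simp only [Nat.succ_ne_zero, if_false, Nat.succ_sub_one]
    have hcast : (1 : ℚ) - ((n' + 1 : ℕ) : ℚ) = -(n' : ℚ) := by push_cast; ring
    rw [PP, Finset.smul_sum]
    apply Finset.sum_congr rfl
    intro i _
    rw [smul_smul]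
    rw [hcast]
    congr 1
    cases i with
    | zero =>
      simp only [if_pos rfl, sub_zero, rr_zero]
      push_cast [Nat.factorial_succ]
      ring
    | succ i =>
      simp only [Nat.succ_ne_zero, if_false, Nat.succ_sub_one]
      rw [rr_succ n' i]
      push_cast
      ring

lemma prod_eq_rr (n i : ℕ) : (∏ k ∈ range n, (((i : ℚ) + 1) + k)) = rr n i := by
  induction n with
  | zero =>
    simp only [Finset.range_zero, Finset.prod_empty, rr, Nat.zero_add]
    rw [div_self (Nat.cast_ne_zero.mpr (Nat.factorial_ne_zero i))]
  | succ n ih =>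
    rw [Finset.prod_range_succ, ih]
    unfold rr
    have : (n + 1 + i).factorial = (n + 1 + i) * (n + i).factorial := by
      rw [show n + 1 + i = (n + i) + 1 from by ring, Nat.factorial_succ]
    rw [this]
    push_cast
    field_simp
    ring

lemma pbPoly_eq (k : ℤ) (x : ℚ) (m : ℕ) :
    pbPoly k x m = m.factorial *
      ∑ i ∈ range (m + 1), ((i : ℚ) + 1) ^ (-k) * cc (-x) m i := by
  unfold pbPoly pbEGF
  congr 1
  rw [PowerSeries.coeff_mul]
  have step1 : ∀ pq ∈ antidiagonal m,
      coeff pq.1 (rescale (-x) expQ) * coeff pq.2 (liEGF k)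
      = ∑ i ∈ range (m + 1), ((i : ℚ) + 1) ^ (-k) *
          (coeff pq.1 (rescale (-x) expQ) * coeff pq.2 ((1 - expNegQ) ^ i)) := by
    intro pq hpq
    rw [liEGF, PowerSeries.coeff_mk]
    have hle : pq.2 + 1 ≤ m + 1 := by
      have := Finset.HasAntidiagonal.antidiagonal.snd_le hpq
      omega
    rw [← Finset.sum_subset (Finset.range_subset_range.mpr hle)
      (fun i _ hi => by
        rw [coeff_one_sub_pow_eq_zero (by simp at hi ⊢; omega)]
        ring)]
    rw [Finset.mul_sum]
    apply Finset.sum_congr rfl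
    intro i _
    ring
  rw [Finset.sum_congr rfl step1, Finset.sum_comm]
  apply Finset.sum_congr rfl
  intro i _
  rw [← Finset.mul_sum, ← PowerSeries.coeff_mul]
  rfl

lemma scrB_eq (l m n : ℕ) :
    scrB l m n = m.factorial *
      ∑ i ∈ range (m + 1), rr n i * cc (-(n : ℚ)) m i * ((i : ℚ) + 1) ^ l := by
  unfold scrB
  have hpb : ∀ j : ℕ, pbPoly (-(l : ℤ) - (j : ℕ)) (n : ℚ) m
      = m.factorial * ∑ i ∈ range (m + 1),
          ((i : ℚ) + 1) ^ (l + j) * cc (-(n : ℚ)) m i := by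
    intro j
    rw [pbPoly_eq]
    congr 1
    apply Finset.sum_congr rfl
    intro i _
    congr 1
    rw [show -(-(l : ℤ) - (j : ℕ)) = ((l + j : ℕ) : ℤ) by push_cast; ring, zpow_natCast]
  calc ∑ j ∈ range (n + 1), (stirling1 n j : ℚ) * pbPoly (-(l : ℤ) - j) n m
      = ∑ j ∈ range (n + 1), (stirling1 n j : ℚ) * (m.factorial *
          ∑ i ∈ range (m + 1), ((i : ℚ) + 1) ^ (l + j) * cc (-(n : ℚ)) m i) := by
        apply Finset.sum_congr rfl; intro j _; rw [hpb]
    _ = m.factorial * ∑ i ∈ range (m + 1), ∑ j ∈ range (n + 1),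
          (stirling1 n j : ℚ) * (((i : ℚ) + 1) ^ (l + j) * cc (-(n : ℚ)) m i) := by
        have hterm : ∀ j : ℕ, (stirling1 n j : ℚ) * ((m.factorial : ℚ) *
            ∑ i ∈ range (m + 1), ((i : ℚ) + 1) ^ (l + j) * cc (-(n : ℚ)) m i)
            = (m.factorial : ℚ) * ∑ i ∈ range (m + 1),
              (stirling1 n j : ℚ) * (((i : ℚ) + 1) ^ (l + j) * cc (-(n : ℚ)) m i) := by
          intro j
          rw [Finset.mul_sum, Finset.mul_sum, Finset.mul_sum]
          apply Finset.sum_congr rfl; intro i _; ring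
        rw [Finset.sum_congr rfl (fun j _ => hterm j), ← Finset.mul_sum, Finset.sum_comm]
    _ = m.factorial * ∑ i ∈ range (m + 1),
          rr n i * cc (-(n : ℚ)) m i * ((i : ℚ) + 1) ^ l := by
        congr 1
        apply Finset.sum_congr rfl; intro i _
        have : ∑ j ∈ range (n + 1), (stirling1 n j : ℚ) *
            (((i : ℚ) + 1) ^ (l + j) * cc (-(n : ℚ)) m i)
            = (∑ j ∈ range (n + 1), (stirling1 n j : ℚ) * ((i : ℚ) + 1) ^ j)
              * (((i : ℚ) + 1) ^ l * cc (-(n : ℚ)) m i) := by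
          rw [Finset.sum_mul]
          apply Finset.sum_congr rfl; intro j _
          rw [pow_add]; ring
        rw [this, stirling1_sum, prod_eq_rr]
        ring

abbrev R := PowerSeries ℚ
abbrev S := PowerSeries R

/-- the z-coefficients of the triple EGF -/
noncomputable def L (n : ℕ) : S :=
  PowerSeries.mk fun m => PowerSeries.mk fun l =>
    scrB l m n / ((l.factorial : ℚ) * m.factorial * n.factorial)

noncomputable def A2 : S :=
  PowerSeries.C expQ + PowerSeries.exp R - PowerSeries.C expQ * PowerSeries.exp R

lemma claimK (n m : ℕ) :
    (PowerSeries.mk fun l => scrB l m n / ((l.factorial : ℚ) * m.factorial * n.factorial))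
      = (n.factorial : ℚ)⁻¹ • PP n m := by
  ext l
  rw [PowerSeries.coeff_mk, map_smul, PP, map_sum]
  have hco : ∀ i : ℕ, coeff l ((rr n i * cc (-(n : ℚ)) m i) • expQ ^ (i + 1))
      = rr n i * cc (-(n : ℚ)) m i * (((i : ℚ) + 1) ^ l * (l.factorial : ℚ)⁻¹) := by
    intro i
    rw [map_smul, smul_eq_mul, expQ, PowerSeries.exp_pow_eq_rescale_exp, PowerSeries.coeff_rescale,
      PowerSeries.coeff_exp]
    simp only [eq_ratCast, Rat.cast_div, Rat.cast_one, Rat.cast_natCast, one_div]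
    push_cast
    ring
  rw [Finset.sum_congr rfl (fun i _ => hco i), scrB_eq, smul_eq_mul, Finset.mul_sum,
    Finset.mul_sum]
  have hl : ((l.factorial : ℚ)) ≠ 0 := Nat.cast_ne_zero.mpr (Nat.factorial_ne_zero _)
  have hm : ((m.factorial : ℚ)) ≠ 0 := Nat.cast_ne_zero.mpr (Nat.factorial_ne_zero _)
  have hn : ((n.factorial : ℚ)) ≠ 0 := Nat.cast_ne_zero.mpr (Nat.factorial_ne_zero _)
  rw [div_eq_iff (by positivity)]
  rw [Finset.sum_mul]
  apply Finset.sum_congr rfl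
  intro i _
  field_simp

lemma A2_eq : A2 = 1 - PowerSeries.C (expQ - 1) * (PowerSeries.exp R - 1) := by
  unfold A2
  rw [map_sub, map_one]
  ring

lemma coeff_L_mul_A2 (n m : ℕ) :
    coeff m (L n * A2) = (n.factorial : ℚ)⁻¹ •
      (PP n m - (expQ - 1) * ∑ pq ∈ antidiagonal m,
        ((pq.2.factorial : ℚ)⁻¹ - if pq.2 = 0 then 1 else 0) • PP n pq.1) := by
  rw [A2_eq, mul_sub, mul_one, map_sub]
  have h1 : coeff m (L n) = (n.factorial : ℚ)⁻¹ • PP n m := by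
    rw [L, PowerSeries.coeff_mk, claimK]
  have h2 : coeff m (L n * (PowerSeries.C (expQ - 1) * (PowerSeries.exp R - 1)))
      = (n.factorial : ℚ)⁻¹ • ((expQ - 1) * ∑ pq ∈ antidiagonal m,
          ((pq.2.factorial : ℚ)⁻¹ - if pq.2 = 0 then 1 else 0) • PP n pq.1) := by
    have e1 : L n * (PowerSeries.C (expQ - 1) * (PowerSeries.exp R - 1))
        = (L n * (PowerSeries.exp R - 1)) * PowerSeries.C (expQ - 1) := by ring
    rw [e1, PowerSeries.coeff_mul_C, PowerSeries.coeff_mul]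
    have e2 : ∀ pq ∈ antidiagonal m,
        coeff pq.1 (L n) * coeff pq.2 (PowerSeries.exp R - 1)
        = (n.factorial : ℚ)⁻¹ •
            (((pq.2.factorial : ℚ)⁻¹ - if pq.2 = 0 then 1 else 0) • PP n pq.1) := by
      intro pq _
      rw [map_sub, PowerSeries.coeff_exp, PowerSeries.coeff_one, L, PowerSeries.coeff_mk,
        claimK]
      rw [smul_comm ((n.factorial : ℚ)⁻¹)]
      rw [smul_smul, Algebra.smul_def, Algebra.smul_def]
      push_cast
      rw [one_div]
      by_cases h : pq.2 = 0 <;> simp [h, PowerSeries.algebraMap_apply] <;> ring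
    rw [Finset.sum_congr rfl e2, ← Finset.smul_sum, smul_mul_assoc]
    congr 1
    ring
  rw [h1, h2, ← smul_sub]

lemma L_mul_A2_zero : L 0 * A2 = PowerSeries.C expQ * PowerSeries.exp R := by
  ext m
  rw [coeff_L_mul_A2, main]
  simp only [if_pos rfl, Nat.factorial_zero, Nat.cast_one, inv_one, one_smul]
  rw [PowerSeries.coeff_C_mul, PowerSeries.coeff_exp, Algebra.smul_def]
  rw [mul_comm]
  congr 1
  rw [one_div]
  push_cast
  rfl

lemma L_mul_A2_succ (n : ℕ) : L (n + 1) * A2 = L n := by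
  ext m
  rw [coeff_L_mul_A2, main]
  simp only [Nat.succ_ne_zero, if_false, Nat.succ_sub_one]
  rw [L, PowerSeries.coeff_mk, claimK, smul_smul]
  have hn : ((n.factorial : ℚ)) ≠ 0 := Nat.cast_ne_zero.mpr (Nat.factorial_ne_zero _)
  have hn1 : ((n : ℚ) + 1) ≠ 0 := by positivity
  have hsc : (((n + 1).factorial : ℕ) : ℚ)⁻¹ * (((n + 1) : ℕ) : ℚ) = ((n.factorial : ℕ) : ℚ)⁻¹ := by
    rw [Nat.factorial_succ]
    push_cast
    field_simp
  rw [hsc]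

lemma hprod :
    (PowerSeries.mk fun n => PowerSeries.mk fun m => PowerSeries.mk fun l =>
        scrB l m n / ((l.factorial : ℚ) * m.factorial * n.factorial) :
        PowerSeries S) * (PowerSeries.C A2 - PowerSeries.X)
      = PowerSeries.C (PowerSeries.C expQ * PowerSeries.exp R) := by
  apply PowerSeries.ext
  intro n
  rw [mul_sub, map_sub, PowerSeries.coeff_mul_C]
  have hLn : ∀ k, coeff k (PowerSeries.mk fun n => PowerSeries.mk fun m =>
      PowerSeries.mk fun l => scrB l m n / ((l.factorial : ℚ) * m.factorial * n.factorial))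
      = L k := fun k => PowerSeries.coeff_mk _ _
  cases n with
  | zero =>
    rw [PowerSeries.coeff_zero_mul_X, sub_zero, hLn, PowerSeries.coeff_zero_C]
    exact L_mul_A2_zero
  | succ n =>
    rw [PowerSeries.coeff_succ_mul_X, hLn, hLn, PowerSeries.coeff_C,
      if_neg (Nat.succ_ne_zero n)]
    rw [L_mul_A2_succ]
    exact sub_self _

lemma hunit : IsUnit (eX3 + eY3 - eX3 * eY3 - PowerSeries.X) := by
  rw [PowerSeries.isUnit_iff_constantCoeff]
  have : constantCoeff (eX3 + eY3 - eX3 * eY3 - PowerSeries.X) = A2 := by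
    simp [eX3, eY3, A2, PowerSeries.constantCoeff_C, PowerSeries.constantCoeff_X]
  rw [this, PowerSeries.isUnit_iff_constantCoeff]
  have : constantCoeff A2 = 1 := by
    simp [A2, PowerSeries.constantCoeff_C, PowerSeries.constantCoeff_exp, expQ]
  rw [this]
  exact isUnit_one

end Scr

/-- ∑_{l,m,n} 𝓑_m^{(-l)}(n) x^l y^m z^n/(l!m!n!) = e^{x+y}/(e^x+e^y-e^{x+y}-z). -/
theorem scrB_triple_egf :
    (PowerSeries.mk fun n => PowerSeries.mk fun m => PowerSeries.mk fun l =>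
        scrB l m n / ((l.factorial : ℚ) * m.factorial * n.factorial) :
        PowerSeries (PowerSeries (PowerSeries ℚ))) =
      eX3 * eY3 * Ring.inverse (eX3 + eY3 - eX3 * eY3 - X) := by
  have hC : eX3 + eY3 - eX3 * eY3 - PowerSeries.X = PowerSeries.C Scr.A2 - PowerSeries.X := by
    simp [eX3, eY3, Scr.A2, map_sub, map_add, map_mul]
  have hXY : eX3 * eY3 = PowerSeries.C (PowerSeries.C expQ * PowerSeries.exp Scr.R) := by
    simp [eX3, eY3, map_mul]
  have h := Scr.hprod
  rw [← hC] at h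
  set u := eX3 + eY3 - eX3 * eY3 - PowerSeries.X with hu
  rw [hXY, ← h, mul_assoc, Ring.mul_inverse_cancel _ Scr.hunit, mul_one]
end

section
/- Let G(u,t) = e^u/(1 - e^u(1-e^t)) and G_n(u,t) = e^{nt} \sum_{j=0}^{n} [n choose_1 j] (\partial^j/\partial u^j) G(u,t). Then G_n(u,t) = e^{-nu} \sum_{m\ge 1} ((m+n-1)!/(m-1)!) e^{-mt} (1-e^{-u})^{m-1}. -/
open PowerSeries Finset

/-- e^u viewed in ℚ[[t]][[u]] (outer variable u). -/
noncomputable def eU : PowerSeries (PowerSeries ℚ) := PowerSeries.exp (PowerSeries ℚ)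

/-- e^{-u} viewed in ℚ[[t]][[u]]. -/
noncomputable def eNegU : PowerSeries (PowerSeries ℚ) := rescale (-1) eU

/-- G(u,t) = e^u/(1 - e^u(1-e^t)), as an element of ℚ[[t]][[u]]. -/
noncomputable def Gser : PowerSeries (PowerSeries ℚ) :=
  eU * Ring.inverse (1 - eU * (1 - PowerSeries.C expQ))

/-- G_n(u,t) = e^{nt} ∑_{j=0}^n [n,j] ∂^j/∂u^j G(u,t). -/
noncomputable def Gnser (n : ℕ) : PowerSeries (PowerSeries ℚ) :=
  PowerSeries.C (expQ ^ n) *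
    ∑ j ∈ range (n + 1), (stirling1 n j : ℚ) • (derivativeFun^[j] Gser)

local notation "CC" => PowerSeries.C (R := PowerSeries ℚ)
noncomputable def XX : PowerSeries (PowerSeries ℚ) := 1 - eNegU

lemma h1 : eU * eNegU = 1 := exp_mul_exp_neg_eq_one
lemma h2 : expQ * expNegQ = 1 := exp_mul_exp_neg_eq_one
lemma h2' : CC expQ * CC expNegQ = 1 := by rw [← map_mul, h2, map_one]

lemma constXX : constantCoeff XX = 0 := by
  have : constantCoeff eNegU = 1 := by
    simp [eNegU, eU, ← coeff_zero_eq_constantCoeff_apply, coeff_rescale, coeff_exp]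
  simp [XX, this]

lemma factored : 1 - eU * (1 - CC expQ) = (1 - CC expNegQ * XX) * (eU * CC expQ) := by
  have e1 := h1; have e2 := h2'
  unfold XX
  linear_combination (eU - eU * eNegU) * e2 - e1

lemma unit_main : IsUnit (1 - eU * (1 - CC expQ)) := by
  rw [factored]
  refine (IsUnit.mul ?_ (IsUnit.mul ?_ ?_))
  · rw [isUnit_iff_constantCoeff]
    simp [constXX]
  · exact IsUnit.of_mul_eq_one _ h1
  · exact IsUnit.of_mul_eq_one _ h2'

lemma Gser_key : Gser * (1 - CC expNegQ * XX) = CC expNegQ := by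
  have hG : Gser * (1 - eU * (1 - CC expQ)) = eU := by
    unfold Gser
    rw [mul_assoc, Ring.inverse_mul_cancel _ unit_main, mul_one]
  rw [factored] at hG
  have := congrArg (· * (eNegU * CC expNegQ)) hG
  calc Gser * (1 - CC expNegQ * XX)
      = Gser * ((1 - CC expNegQ * XX) * (eU * CC expQ)) * (eNegU * CC expNegQ)
        + Gser * (1 - CC expNegQ * XX) * (1 - (eU * eNegU) * (CC expQ * CC expNegQ)) := by ring
    _ = CC expNegQ := by rw [h1, h2', this, ← mul_assoc, h1]; ring

lemma coeff_vanish (j k : ℕ) (h : j < k) (f : PowerSeries (PowerSeries ℚ)) :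
    coeff j (f * XX ^ k) = 0 := by
  have h1 : (X : PowerSeries (PowerSeries ℚ)) ^ k ∣ f * XX ^ k :=
    Dvd.dvd.mul_left (pow_dvd_pow_of_dvd (X_dvd_iff.mpr constXX) k) f
  exact X_pow_dvd_iff.mp h1 j h

lemma coeff_Gser (j : ℕ) :
    coeff j Gser = ∑ m ∈ range (j + 1),
      expNegQ ^ (m + 1) * coeff j (XX ^ m) := by
  set y : PowerSeries (PowerSeries ℚ) := CC expNegQ * XX with hy
  have geo : (∑ k ∈ range (j+1), y ^ k) * (1 - y) = 1 - y ^ (j+1) := by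
    have := geom_sum_mul y (j+1); linear_combination -this
  have expand : Gser = (∑ k ∈ range (j+1), CC expNegQ * y ^ k) + y ^ (j+1) * Gser := by
    calc Gser = (∑ k ∈ range (j+1), y ^ k) * (Gser * (1 - y)) + y ^ (j+1) * Gser := by
          rw [show (∑ k ∈ range (j+1), y ^ k) * (Gser * (1 - y))
              = Gser * ((∑ k ∈ range (j+1), y ^ k) * (1 - y)) by ring, geo]; ring
      _ = _ := by rw [Gser_key, sum_mul]; simp [mul_comm]
  have hterm : ∀ k, CC expNegQ * y ^ k = CC (expNegQ ^ (k+1)) * XX ^ k := by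
    intro k
    rw [hy, mul_pow, ← map_pow, ← mul_assoc, ← map_mul, ← pow_succ']
  have hvan : coeff j (y ^ (j+1) * Gser) = 0 := by
    rw [hy, mul_pow, show CC expNegQ ^ (j+1) * XX ^ (j+1) * Gser
        = (CC expNegQ ^ (j+1) * Gser) * XX ^ (j+1) by ring]
    exact coeff_vanish j (j+1) (Nat.lt_succ_self j) _
  rw [expand, map_add, hvan, add_zero, map_sum]
  exact Finset.sum_congr rfl fun k _ => by rw [hterm k, coeff_C_mul]

lemma coeff_dF (f : ℚ⟦X⟧⟦X⟧) (n : ℕ) :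
    coeff n (derivativeFun f) = coeff (n + 1) f * (n + 1) := coeff_derivative f n

lemma dE : derivativeFun eNegU = -eNegU := by
  ext n : 1
  rw [coeff_dF]
  simp only [eNegU, eU, coeff_rescale, coeff_exp, map_neg]
  rw [show ((n:ℚ⟦X⟧)+1) = ((n+1:ℕ):ℚ⟦X⟧) by push_cast; ring,
    ← map_natCast (algebraMap ℚ (PowerSeries ℚ)) (n+1), mul_assoc, ← map_mul]
  have key : (1 / ((n+1).factorial:ℚ)) * ((n+1:ℕ):ℚ) = 1 / (n.factorial:ℚ) := by
    rw [Nat.factorial_succ]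
    have h0 : ((n:ℚ)+1) ≠ 0 := by positivity
    have h1 : ((n.factorial:ℚ)) ≠ 0 := Nat.cast_ne_zero.mpr n.factorial_ne_zero
    push_cast
    field_simp
  rw [key, pow_succ]
  ring_nf

lemma dpow (f : PowerSeries (PowerSeries ℚ)) : ∀ k : ℕ,
    derivativeFun (f ^ (k+1)) = ((k:ℚ⟦X⟧⟦X⟧) + 1) * f ^ k * derivativeFun f := by
  intro k
  induction k with
  | zero => simp [derivativeFun_mul, smul_eq_mul]
  | succ k ih =>
    rw [pow_succ, derivativeFun_mul, ih]
    push_cast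
    simp only [smul_eq_mul]
    ring

lemma dEn (n : ℕ) : derivativeFun (eNegU ^ n) = -((n : ℚ⟦X⟧⟦X⟧) * eNegU ^ n) := by
  cases n with
  | zero => simp [derivativeFun_one]
  | succ n => rw [dpow, dE, pow_succ]; push_cast; ring

lemma dXX : derivativeFun XX = eNegU := by
  have h : (XX + eNegU).derivativeFun = XX.derivativeFun + eNegU.derivativeFun :=
    derivativeFun_add _ _
  rw [show XX + eNegU = 1 from by unfold XX; ring, derivativeFun_one, dE] at h
  linear_combination -h

lemma dXXm (m : ℕ) : derivativeFun (XX ^ (m+1)) = ((m : ℚ⟦X⟧⟦X⟧) + 1) * (eNegU * XX ^ m) := by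
  rw [dpow, dXX]; ring

lemma Dterm (n m : ℕ) : derivativeFun (eNegU ^ n * XX ^ m) =
    (m : ℚ⟦X⟧⟦X⟧) * (eNegU ^ (n+1) * XX ^ (m-1)) - (n : ℚ⟦X⟧⟦X⟧) * (eNegU ^ n * XX ^ m) := by
  cases m with
  | zero => simp [dEn]
  | succ m =>
    rw [derivativeFun_mul, dEn, dXXm]
    simp only [smul_eq_mul, Nat.add_sub_cancel, pow_succ]
    push_cast
    ring


lemma stirling1_of_lt : ∀ n k : ℕ, n < k → stirling1 n k = 0 := by
  intro n
  induction n with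
  | zero => intro k hk; cases k with | zero => omega | succ k => rfl
  | succ n ih =>
    intro k hk
    cases k with
    | zero => omega
    | succ k =>
      show stirling1 n k + n * stirling1 n (k+1) = 0
      rw [ih k (by omega), ih (k+1) (by omega)]
      ring

lemma derivativeFun_sum {s : Finset ℕ} (f : ℕ → ℚ⟦X⟧⟦X⟧) :
    derivativeFun (∑ i ∈ s, f i) = ∑ i ∈ s, derivativeFun (f i) :=
  map_sum (d⁄dX (PowerSeries ℚ)) f s

lemma derivativeFun_qsmul (q : ℚ) (f : ℚ⟦X⟧⟦X⟧) :
    derivativeFun (q • f) = q • derivativeFun f := by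
  rw [← algebraMap_smul (PowerSeries ℚ) q f, derivativeFun_smul, algebraMap_smul]

lemma dCmul (a : ℚ⟦X⟧) (f : ℚ⟦X⟧⟦X⟧) :
    derivativeFun (CC a * f) = CC a * derivativeFun f := by
  rw [derivativeFun_mul, show derivativeFun (CC a) = 0 from derivative_C]; simp [smul_eq_mul]

lemma Gnser_succ (n : ℕ) :
    Gnser (n+1) = CC expQ * (derivativeFun (Gnser n) + (n:ℚ) • Gnser n) := by
  set A : ℚ⟦X⟧⟦X⟧ := ∑ j ∈ range (n + 1), (stirling1 n j : ℚ) • (derivativeFun^[j] Gser) with hA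
  have hDA : derivativeFun A = ∑ j ∈ range (n+1),
      (stirling1 n j : ℚ) • (derivativeFun^[j+1] Gser) := by
    rw [hA, derivativeFun_sum]
    refine Finset.sum_congr rfl fun j _ => ?_
    rw [derivativeFun_qsmul, Function.iterate_succ_apply']
  have hnA : (n:ℚ) • A = ∑ j ∈ range (n+1),
      ((n:ℚ) * (stirling1 n (j+1) : ℚ)) • (derivativeFun^[j+1] Gser) := by
    rw [hA, Finset.smul_sum]
    rw [Finset.sum_range_succ', Finset.sum_range_succ]
    rw [stirling1_of_lt n (n+1) (by omega)]
    have hz : (n:ℚ) • ((stirling1 n 0 : ℚ) • (derivativeFun^[0] Gser)) = 0 := by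
      cases n with
      | zero => simp
      | succ n => show _ • ((stirling1 (n+1) 0 : ℚ) • _) = 0; simp [stirling1]
    rw [hz]
    simp [smul_smul]
  have hsum : ∑ j ∈ range (n+2), (stirling1 (n+1) j : ℚ) • (derivativeFun^[j] Gser)
      = derivativeFun A + (n:ℚ) • A := by
    rw [Finset.sum_range_succ']
    have h0 : ((stirling1 (n+1) 0 : ℚ)) • (derivativeFun^[0] Gser) = 0 := by
      show ((stirling1 (n+1) 0 : ℚ)) • Gser = 0
      simp [stirling1]
    rw [h0, add_zero, hDA, hnA, ← Finset.sum_add_distrib]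
    refine Finset.sum_congr rfl fun j _ => ?_
    show ((stirling1 n j + n * stirling1 n (j+1) : ℕ) : ℚ) • _ = _
    push_cast
    rw [add_smul]
  show CC (expQ ^ (n+1)) * _ = _
  rw [hsum, pow_succ, mul_comm (expQ ^ n) expQ, map_mul, mul_assoc]
  congr 1
  show CC (expQ ^ n) * _ = _
  rw [mul_add, ← dCmul, mul_smul_comm]
  rfl

noncomputable def RHSk (n j : ℕ) : PowerSeries ℚ := ∑ m ∈ range (j+1),
  C (((m+n).factorial : ℚ)/(m.factorial:ℚ)) *
    (expNegQ^(m+1) * coeff j (eNegU^n * XX^m))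

lemma fact_id (m n : ℕ) :
    C ((((m+1)+n).factorial : ℚ)/((m+1).factorial:ℚ)) * ((m:ℚ⟦X⟧)+1)
      = C (((m+(n+1)).factorial : ℚ)/(m.factorial:ℚ)) := by
  rw [show ((m:ℚ⟦X⟧)+1) = C ((m:ℚ)+1) by rw [map_add, map_natCast, map_one], ← map_mul]
  congr 1
  rw [show m+1+n = m+(n+1) by omega, Nat.factorial_succ]
  have h0 : ((m:ℚ)+1) ≠ 0 := by positivity
  have h1 : ((m.factorial:ℚ)) ≠ 0 := Nat.cast_ne_zero.mpr m.factorial_ne_zero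
  push_cast
  field_simp

lemma keyD (n m j : ℕ) :
    coeff j (derivativeFun (eNegU^n * XX^m)) =
      (m:ℚ⟦X⟧) * coeff j (eNegU^(n+1) * XX^(m-1))
        - (n:ℚ⟦X⟧) * coeff j (eNegU^n * XX^m) := by
  rw [Dterm, map_sub,
    show ((m:ℚ⟦X⟧⟦X⟧)) = CC (m:ℚ⟦X⟧) from (map_natCast CC m).symm,
    show ((n:ℚ⟦X⟧⟦X⟧)) = CC (n:ℚ⟦X⟧) from (map_natCast CC n).symm,
    coeff_C_mul, coeff_C_mul]

lemma step (n j : ℕ)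
    (IH1 : coeff (j+1) (Gnser n) = RHSk n (j+1))
    (IH0 : coeff j (Gnser n) = RHSk n j) :
    coeff j (Gnser (n+1)) = RHSk (n+1) j := by
  have a1 : coeff j (Gnser (n+1))
      = expQ * (coeff j (derivativeFun (Gnser n))
          + (n:ℚ⟦X⟧) * coeff j (Gnser n)) := by
    rw [Gnser_succ, coeff_C_mul, map_add]
    congr 2
    rw [LinearMap.map_smul_of_tower, PowerSeries.smul_eq_C_mul, map_natCast]
  rw [a1, coeff_dF, IH1, IH0]
  -- expand RHSk n (j+1) * (j+1)
  have e1 : RHSk n (j+1) * ((j:ℚ⟦X⟧)+1)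
      = ∑ m ∈ range (j+2), C (((m+n).factorial : ℚ)/(m.factorial:ℚ)) *
          (expNegQ^(m+1) * (coeff (j+1) (eNegU^n * XX^m) * ((j:ℚ⟦X⟧)+1))) := by
    rw [RHSk, Finset.sum_mul]
    exact Finset.sum_congr rfl fun m _ => by ring
  have e2 : ∀ m : ℕ, coeff (j+1) (eNegU^n * XX^m) * ((j:ℚ⟦X⟧)+1)
      = (m:ℚ⟦X⟧) * coeff j (eNegU^(n+1) * XX^(m-1))
        - (n:ℚ⟦X⟧) * coeff j (eNegU^n * XX^m) := by
    intro m
    rw [← coeff_dF, keyD]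
  have e3 : RHSk n (j+1) * ((j:ℚ⟦X⟧)+1)
      = (∑ m ∈ range (j+2), C (((m+n).factorial : ℚ)/(m.factorial:ℚ)) *
          (expNegQ^(m+1) * ((m:ℚ⟦X⟧) * coeff j (eNegU^(n+1) * XX^(m-1)))))
        - (n:ℚ⟦X⟧) * (∑ m ∈ range (j+2), C (((m+n).factorial : ℚ)/(m.factorial:ℚ)) *
          (expNegQ^(m+1) * coeff j (eNegU^n * XX^m))) := by
    rw [e1, Finset.mul_sum, ← Finset.sum_sub_distrib]
    exact Finset.sum_congr rfl fun m _ => by rw [e2]; ring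
  -- second sum truncates to RHSk n j
  have e4 : ∑ m ∈ range (j+2), C (((m+n).factorial : ℚ)/(m.factorial:ℚ)) *
        (expNegQ^(m+1) * coeff j (eNegU^n * XX^m)) = RHSk n j := by
    rw [Finset.sum_range_succ, coeff_vanish j (j+1) (by omega), RHSk]
    simp
  -- first sum reindexes
  have e5 : ∑ m ∈ range (j+2), C (((m+n).factorial : ℚ)/(m.factorial:ℚ)) *
        (expNegQ^(m+1) * ((m:ℚ⟦X⟧) * coeff j (eNegU^(n+1) * XX^(m-1))))
      = ∑ m ∈ range (j+1), C ((((m+1)+n).factorial : ℚ)/((m+1).factorial:ℚ)) *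
          (expNegQ^(m+2) * (((m:ℚ⟦X⟧)+1) * coeff j (eNegU^(n+1) * XX^m))) := by
    rw [Finset.sum_range_succ']
    simp only [Nat.cast_zero, Nat.cast_add, Nat.cast_one, Nat.add_sub_cancel]
    simp
  rw [e3, e4, e5]
  have e6 : ∀ m ∈ range (j+1), expQ * (C ((((m+1)+n).factorial : ℚ)/((m+1).factorial:ℚ)) *
        (expNegQ^(m+2) * (((m:ℚ⟦X⟧)+1) * coeff j (eNegU^(n+1) * XX^m))))
      = C (((m+(n+1)).factorial : ℚ)/(m.factorial:ℚ)) *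
          (expNegQ^(m+1) * coeff j (eNegU^(n+1) * XX^m)) := by
    intro m _
    rw [← fact_id m n, show expNegQ^(m+2) = expNegQ * expNegQ^(m+1) from pow_succ' _ _]
    have := h2
    linear_combination (C ((((m+1)+n).factorial : ℚ)/((m+1).factorial:ℚ)) * (((m:ℚ⟦X⟧)+1)
      * (expNegQ^(m+1) * coeff j (eNegU^(n+1) * XX^m)))) * this
  rw [sub_add_cancel, Finset.mul_sum, Finset.sum_congr rfl e6, RHSk]

lemma main (n : ℕ) : ∀ j, coeff j (Gnser n) = RHSk n j := by
  induction n with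
  | zero =>
    intro j
    have hG0 : Gnser 0 = Gser := by
      rw [Gnser]
      simp [stirling1]
    rw [hG0, coeff_Gser, RHSk]
    refine Finset.sum_congr rfl fun m _ => ?_
    have h1 : (((m+0).factorial:ℚ))/(m.factorial:ℚ) = 1 := by
      rw [Nat.add_zero]
      exact div_self (Nat.cast_ne_zero.mpr m.factorial_ne_zero)
    rw [h1, map_one, one_mul, pow_zero, one_mul]
  | succ n ih => exact fun j => step n j (ih (j+1)) (ih j)


/-- G_n(u,t) = e^{-nu} ∑_{m≥1} ((m+n-1)!/(m-1)!) e^{-mt} (1-e^{-u})^{m-1}, stated by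
  comparing coefficients of u^j; the sum over m truncates since
  e^{-nu}(1-e^{-u})^{m-1} has order m-1 in u. -/
theorem Gnser_eq (n : ℕ) (j : ℕ) :
    coeff j (Gnser n) =
      ∑ m ∈ range (j + 1),
        (((m + n).factorial : ℚ) / (m.factorial : ℚ)) •
          (expNegQ ^ (m + 1) *
            coeff j (eNegU ^ n * (1 - eNegU) ^ m)) := by
  rw [main, RHSk]
  refine Finset.sum_congr rfl fun m _ => ?_
  rw [PowerSeries.smul_eq_C_mul, XX]
end

section
/- The power series g_1(x) = \sum_{n\ge 0} (2^{n+1}-2) B_n x^{n+1} in Q[[x]] satisfies the functional equation g_1(x/(1-2x)) = g_1(x) + 2x^3(x-2)/(1-x)^2, and it is the unique power series in x Q[[x]] satisfying this equation. -/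
open PowerSeries Finset

/-- Formal substitution f(a) = ∑_n (coeff n f) aⁿ for a power series `a` of positive
  order, defined coefficientwise (the tail vanishes since aⁿ has order ≥ n). -/
noncomputable def substPS (a f : PowerSeries ℚ) : PowerSeries ℚ :=
  PowerSeries.mk fun j => ∑ n ∈ range (j + 1), coeff n f * coeff j (a ^ n)
/-- g₁(x) = ∑_{n≥0} (2^{n+1}-2) Bₙ x^{n+1}. -/
noncomputable def g1 : PowerSeries ℚ :=
  PowerSeries.mk fun n => if n = 0 then 0 else ((2 : ℚ) ^ n - 2) * bernoulli (n - 1)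

/-! ### Auxiliary material -/

/-- The geometric-type series `∑ 2ⁿ xⁿ`, the inverse of `1 - 2x`. -/
noncomputable def S2 : PowerSeries ℚ := PowerSeries.mk fun n => 2 ^ n

lemma S2_mul : (1 - 2 * X) * S2 = 1 := by
  ext n
  cases n with
  | zero => simp [S2]
  | succ n =>
    rw [sub_mul, one_mul, map_sub]
    have h2 : (2 * X * S2 : ℚ⟦X⟧) = X * (2 * S2) := by ring
    rw [h2, coeff_succ_X_mul]
    rw [show (2:ℚ⟦X⟧) = C 2 by rw [map_ofNat]]
    simp [S2, pow_succ, mul_comm]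

noncomputable def U2 : (PowerSeries ℚ)ˣ :=
  ⟨1 - 2*X, S2, S2_mul, by rw [mul_comm]; exact S2_mul⟩

lemma inv_12X : Ring.inverse (1 - 2*X : PowerSeries ℚ) = S2 := by
  have h : (1 - 2*X : ℚ⟦X⟧) = (U2 : ℚ⟦X⟧) := rfl
  rw [h, Ring.inverse_unit]; rfl

lemma mk_one_pow (n : ℕ) :
    (PowerSeries.mk 1 : ℚ⟦X⟧) ^ (n+1) = PowerSeries.mk fun j => ((n + j).choose n : ℚ) := by
  have h1 := invOneSubPow_eq_inv_one_sub_pow (S := ℚ) (d := n+1)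
  have h2 := invOneSubPow_val_succ_eq_mk_add_choose (S := ℚ) (d := n)
  rw [h1] at h2
  rw [← h2, Units.val_pow_eq_pow_val]
  rfl

lemma coeff_S2_pow (n j : ℕ) :
    (PowerSeries.coeff j) (S2 ^ (n+1)) = 2 ^ j * ((n + j).choose n : ℚ) := by
  have hS : S2 = rescale 2 (PowerSeries.mk 1) := by
    ext k; simp [S2, coeff_rescale]
  rw [hS, ← map_pow, mk_one_pow, coeff_rescale, coeff_mk]

lemma coeff_a_pow' (n j : ℕ) (h : n + 1 ≤ j) :
    (PowerSeries.coeff j) ((X * S2) ^ (n+1)) = 2 ^ (j - n - 1) * ((j-1).choose n : ℚ) := by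
  rw [mul_pow, coeff_X_pow_mul', if_pos h, coeff_S2_pow,
    show j - (n+1) = j - n - 1 by omega, show n + (j - n - 1) = j - 1 by omega]

lemma inv_one_sub_sq : Ring.inverse ((1 - X : ℚ⟦X⟧) ^ 2) = PowerSeries.mk fun n => (n+1 : ℚ) := by
  have h : ((1 - X: ℚ⟦X⟧) ^ 2) = ((invOneSubPow ℚ 2)⁻¹ : (ℚ⟦X⟧)ˣ) := by
    rw [← invOneSubPow_inv_eq_one_sub_pow]; rfl
  rw [h, Ring.inverse_unit, inv_inv, invOneSubPow_val_succ_eq_mk_add_choose]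
  ext k; simp [add_comm]

lemma coeff_E (j : ℕ) :
    (PowerSeries.coeff j) (2 * X ^ 3 * (X - 2) * PowerSeries.mk fun n => (n+1 : ℚ)) =
      (if 4 ≤ j then 2*((j:ℚ)-3) else 0) - (if 3 ≤ j then 4*((j:ℚ)-2) else 0) := by
  set T : ℚ⟦X⟧ := PowerSeries.mk fun n => (n+1 : ℚ) with hT
  have hE : 2 * X^3 * (X - 2) * T = C 2 * (X^4 * T) - C 4 * (X^3 * T) := by
    rw [map_ofNat, map_ofNat]; ring
  rw [hE, map_sub, coeff_C_mul, coeff_C_mul, coeff_X_pow_mul', coeff_X_pow_mul']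
  congr 1
  · split_ifs with h
    · rw [hT, coeff_mk]
      have : ((j - 4 : ℕ) : ℚ) = (j : ℚ) - 4 := by
        push_cast [Nat.cast_sub h]; ring
      rw [this]; ring
    · ring
  · split_ifs with h
    · rw [hT, coeff_mk]
      have : ((j - 3 : ℕ) : ℚ) = (j : ℚ) - 3 := by
        push_cast [Nat.cast_sub h]; ring
      rw [this]; ring
    · ring

lemma bern_eval_two (k : ℕ) :
    ∑ m ∈ range (k+1), bernoulli m * (k.choose m) * 2^(k-m) = bernoulli' k + k := by
  have h1 : (Polynomial.bernoulli k).eval 2 =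
      ∑ m ∈ range (k+1), bernoulli m * (k.choose m) * 2^(k-m) := by
    rw [Polynomial.bernoulli, Polynomial.eval_finset_sum]
    refine Finset.sum_congr rfl fun i _ => ?_
    simp
  have h2 : (Polynomial.bernoulli k).eval 2 = bernoulli' k + k := by
    have := Polynomial.bernoulli_eval_one_add k 1
    rw [show (1:ℚ) + 1 = 2 by norm_num, one_pow, mul_one, Polynomial.bernoulli_eval_one] at this
    rw [this]
  rw [← h1, h2]

lemma sum_bern_choose (k : ℕ) :
    ∑ m ∈ range (k+1), (k.choose m : ℚ) * bernoulli m =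
      (if k = 1 then 1 else 0) + bernoulli k := by
  rw [Finset.sum_range_succ, sum_bernoulli, Nat.choose_self, Nat.cast_one, one_mul]

lemma key (k : ℕ) :
    ∑ m ∈ range (k+1), ((2:ℚ)^(m+1) - 2) * bernoulli m * (2^(k-m) * (k.choose m)) =
      ((2:ℚ)^(k+1) - 2) * bernoulli k + (if k ≤ 1 then 0 else -2*(k:ℚ)) := by
  have split : ∀ m ∈ range (k+1),
      ((2:ℚ)^(m+1) - 2) * bernoulli m * (2^(k-m) * (k.choose m)) =
        2^(k+1) * ((k.choose m : ℚ) * bernoulli m)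
          - 2 * (bernoulli m * (k.choose m) * 2^(k-m)) := by
    intro m hm
    rw [Finset.mem_range] at hm
    have hp : (2:ℚ)^(m+1) * 2^(k-m) = 2^(k+1) := by
      rw [← pow_add]; congr 1; omega
    have : ((2:ℚ)^(m+1) - 2) * bernoulli m * (2^(k-m) * (k.choose m)) =
        ((2:ℚ)^(m+1) * 2^(k-m)) * ((k.choose m : ℚ) * bernoulli m)
          - 2 * (bernoulli m * (k.choose m) * 2^(k-m)) := by ring
    rw [this, hp]
  rw [Finset.sum_congr rfl split, Finset.sum_sub_distrib, ← Finset.mul_sum, ← Finset.mul_sum,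
    sum_bern_choose, bern_eval_two]
  rcases k with _ | _ | k
  · norm_num
  · norm_num [bernoulli'_one, bernoulli_one]
  · rw [if_neg (by omega), if_neg (by omega),
      bernoulli_eq_bernoulli'_of_ne_one (by omega)]
    push_cast
    ring

lemma g1_c0 : coeff 0 g1 = 0 := by simp [g1]

lemma main_eq : substPS (X * S2) g1 =
    g1 + 2 * X ^ 3 * (X - 2) * PowerSeries.mk fun n => (n+1 : ℚ) := by
  ext j
  rw [map_add, coeff_E]
  simp only [substPS, coeff_mk]
  rw [Finset.sum_range_succ']
  rw [g1_c0, zero_mul, add_zero]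
  cases j with
  | zero => simp [g1]
  | succ k =>
    have congr1 : ∀ m ∈ range (k+1),
        coeff (m+1) g1 * coeff (k+1) ((X * S2) ^ (m+1)) =
          ((2:ℚ)^(m+1) - 2) * bernoulli m * (2^(k-m) * (k.choose m)) := by
      intro m hm
      rw [Finset.mem_range] at hm
      rw [coeff_a_pow' m (k+1) (by omega), show k+1-m-1 = k-m by omega,
        show k+1-1 = k by omega]
      simp only [g1, coeff_mk, if_neg (Nat.succ_ne_zero m), Nat.add_sub_cancel]
    rw [Finset.sum_congr rfl congr1, key]
    have hg : coeff (k+1) g1 = ((2:ℚ)^(k+1) - 2) * bernoulli k := by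
      simp only [g1, coeff_mk, if_neg (Nat.succ_ne_zero k), Nat.add_sub_cancel]
    rw [hg]
    congr 1
    rcases k with _ | _ | _ | k
    · norm_num
    · norm_num
    · norm_num
    · rw [if_neg (by omega), if_pos (by omega), if_pos (by omega)]
      push_cast
      ring

lemma substPS_sub (a f g : PowerSeries ℚ) :
    substPS a (f - g) = substPS a f - substPS a g := by
  ext j
  simp [substPS, sub_mul, Finset.sum_sub_distrib]

/-- g₁ is the unique element of xℚ[[x]] satisfying
  g₁(x/(1-2x)) = g₁(x) + 2x³(x-2)/(1-x)². -/
theorem g1_unique :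
    substPS (X * Ring.inverse (1 - 2 * X)) g1 =
        g1 + 2 * X ^ 3 * (X - 2) * Ring.inverse ((1 - X) ^ 2) ∧
      ∀ h : PowerSeries ℚ, constantCoeff h = 0 →
        substPS (X * Ring.inverse (1 - 2 * X)) h =
          h + 2 * X ^ 3 * (X - 2) * Ring.inverse ((1 - X) ^ 2) → h = g1 := by
  rw [inv_12X, inv_one_sub_sq]
  refine ⟨main_eq, fun h hc0 heq => ?_⟩
  have hd : substPS (X * S2) (h - g1) = h - g1 := by
    rw [substPS_sub, heq, main_eq]; ring
  have claim : ∀ n, coeff n (h - g1) = 0 := by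
    intro n
    induction n using Nat.strong_induction_on with
    | _ n ih =>
      match n with
      | 0 => rw [map_sub, coeff_zero_eq_constantCoeff, hc0]; simp [g1]
      | k+1 =>
        have hcoeff := congrArg (coeff (k+2)) hd
        simp only [substPS, coeff_mk] at hcoeff
        rw [Finset.sum_range_succ, Finset.sum_range_succ] at hcoeff
        have hz : ∑ m ∈ range (k+1),
            coeff m (h - g1) * coeff (k+2) ((X * S2) ^ m) = 0 := by
          refine Finset.sum_eq_zero fun m hm => ?_
          rw [Finset.mem_range] at hm
          rw [ih m (by omega), zero_mul]
        have h1 : coeff (k+2) ((X * S2) ^ (k+1)) = 2 * (k+1 : ℚ) := by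
          rw [coeff_a_pow' k (k+2) (by omega), show k+2-k-1 = 1 by omega,
            show k+2-1 = k+1 by omega, Nat.choose_succ_self_right]
          push_cast; ring
        have h2 : coeff (k+2) ((X * S2) ^ (k+2)) = 1 := by
          rw [coeff_a_pow' (k+1) (k+2) (by omega), show k+2-(k+1)-1 = 0 by omega,
            show k+2-1 = k+1 by omega, Nat.choose_self]
          norm_num
        rw [hz, zero_add, h1, h2, mul_one] at hcoeff
        have : coeff (k+1) (h - g1) * (2 * (k+1 : ℚ)) = 0 := by linarith
        have hne : (2 * (k+1 : ℚ)) ≠ 0 := by positivity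
        exact (mul_eq_zero.mp this).resolve_right hne
  have : h - g1 = 0 := by ext n; simpa using claim n
  linear_combination this
end

section
/- The power series \beta_1(x) = \sum_{n\ge 0} B_n x^{n+1} is the unique element of x Q[[x]] satisfying \beta_1(x/(1-x)) = \beta_1(x) + x^2. -/
open PowerSeries Finset

/-- β₁(x) = ∑_{n≥0} Bₙ x^{n+1}. -/
noncomputable def beta1 : PowerSeries ℚ :=
  PowerSeries.mk fun n => if n = 0 then 0 else bernoulli (n - 1)

/-- `1/(1-X)^(d+1)` as an explicit power series. -/
noncomputable def geomPS (d : ℕ) : PowerSeries ℚ :=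
  PowerSeries.mk fun n => (Nat.choose (d + n) d : ℚ)

lemma geomPS_mul (d : ℕ) : geomPS d * (1 - X) ^ (d + 1) = 1 := by
  delta geomPS
  exact PowerSeries.mk_add_choose_mul_one_sub_pow_eq_one ℚ d

lemma geomPS_pow (m : ℕ) : geomPS 0 ^ (m + 1) = geomPS m := by
  have h1 : geomPS 0 ^ (m + 1) * (1 - X) ^ (m + 1) = 1 := by
    rw [← mul_pow]
    have := geomPS_mul 0
    rw [zero_add, pow_one] at this
    rw [this, one_pow]
  calc geomPS 0 ^ (m + 1) = geomPS 0 ^ (m + 1) * ((1 - X) ^ (m + 1) * geomPS m) := by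
        rw [mul_comm ((1 - X : PowerSeries ℚ) ^ (m + 1)), geomPS_mul, mul_one]
    _ = (geomPS 0 ^ (m + 1) * (1 - X) ^ (m + 1)) * geomPS m := by ring
    _ = geomPS m := by rw [h1, one_mul]

lemma inverse_one_sub_X : Ring.inverse (1 - X : PowerSeries ℚ) = geomPS 0 := by
  have h : (1 - X : PowerSeries ℚ) * geomPS 0 = 1 := by
    rw [mul_comm]
    have := geomPS_mul 0
    rwa [zero_add, pow_one] at this
  have := Ring.inverse_unit (Units.mkOfMulEqOne _ _ h)
  rwa [Units.val_mkOfMulEqOne] at this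

lemma coeff_a_pow (m j : ℕ) :
    coeff j ((X * Ring.inverse (1 - X) : PowerSeries ℚ) ^ (m + 1)) =
      if m + 1 ≤ j then ((j - 1).choose m : ℚ) else 0 := by
  rw [inverse_one_sub_X, mul_pow, geomPS_pow, coeff_X_pow_mul']
  rcases le_or_gt (m + 1) j with h | h
  · rw [if_pos h, if_pos h, geomPS, coeff_mk]
    congr 2
    omega
  · rw [if_neg (not_le.mpr h), if_neg (not_le.mpr h)]

/-- the key coefficient formula for substitution of X/(1-X). -/
lemma key_s16 (f : PowerSeries ℚ) (j : ℕ) :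
    coeff j (substPS (X * Ring.inverse (1 - X)) f) =
      (if j = 0 then coeff 0 f else 0) +
        ∑ i ∈ range j, coeff (i + 1) f * ((j - 1).choose i : ℚ) := by
  rw [substPS, coeff_mk, Finset.sum_range_succ']
  rw [pow_zero, PowerSeries.coeff_one]
  rw [add_comm]
  congr 1
  · split_ifs with h <;> simp [h]
  · apply Finset.sum_congr rfl
    intro i hi
    have hij : i + 1 ≤ j := Finset.mem_range.mp hi
    rw [coeff_a_pow, if_pos hij]

lemma beta1_eq : substPS (X * Ring.inverse (1 - X)) beta1 = beta1 + X ^ 2 := by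
  ext j
  rw [key_s16, map_add, coeff_X_pow]
  have hb0 : coeff 0 beta1 = 0 := by simp [beta1]
  rcases Nat.eq_zero_or_pos j with rfl | hj
  · simp [hb0, beta1]
  have hj' : j ≠ 0 := hj.ne'
  rw [if_neg hj', zero_add]
  have hterm : ∀ i ∈ range j, coeff (i + 1) beta1 * ((j - 1).choose i : ℚ)
      = ((j - 1).choose i : ℚ) * bernoulli i := by
    intro i _
    simp [beta1, mul_comm]
  rw [Finset.sum_congr rfl hterm]
  obtain ⟨k, rfl⟩ : ∃ k, j = k + 1 := ⟨j - 1, by omega⟩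
  rw [Finset.sum_range_succ]
  have := sum_bernoulli k
  simp only [Nat.add_sub_cancel]
  rw [this, Nat.choose_self]
  have h2 : coeff (k + 1) beta1 = bernoulli k := by simp [beta1]
  rw [h2]
  have : (if k = 1 then (1:ℚ) else 0) = (if k + 1 = 2 then (1:ℚ) else 0) := by
    split_ifs <;> first | rfl | omega
  rw [this]
  push_cast
  ring

/-- β₁ is the unique element of xℚ[[x]] satisfying β₁(x/(1-x)) = β₁(x) + x². -/
theorem beta1_unique :
    substPS (X * Ring.inverse (1 - X)) beta1 = beta1 + X ^ 2 ∧
      ∀ h : PowerSeries ℚ, constantCoeff h = 0 →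
        substPS (X * Ring.inverse (1 - X)) h = h + X ^ 2 → h = beta1 := by
  refine ⟨beta1_eq, fun h h0 heq => ?_⟩
  set d : ℕ → ℚ := fun i => coeff i h - coeff i beta1 with hd
  have hsum : ∀ j : ℕ, ∑ i ∈ range j, d (i + 1) * ((j - 1).choose i : ℚ) = d j := by
    intro j
    have E1 := congrArg (coeff j) heq
    rw [key_s16, map_add] at E1
    have E2 := congrArg (coeff j) beta1_eq
    rw [key_s16, map_add] at E2
    have hsplit : ∑ i ∈ range j, d (i + 1) * ((j - 1).choose i : ℚ)
        = ∑ i ∈ range j, coeff (i + 1) h * ((j - 1).choose i : ℚ)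
          - ∑ i ∈ range j, coeff (i + 1) beta1 * ((j - 1).choose i : ℚ) := by
      rw [← Finset.sum_sub_distrib]
      apply Finset.sum_congr rfl
      intro i _
      simp only [hd]
      ring
    have hif : (if j = 0 then coeff 0 h else 0) = (if j = 0 then coeff 0 beta1 else 0) := by
      split_ifs with hc
      · rw [coeff_zero_eq_constantCoeff, h0]
        simp [beta1]
      · rfl
    rw [hsplit]
    simp only [hd]
    linarith [E1, E2, hif]
  have hzero : ∀ m : ℕ, d m = 0 := by
    intro m
    induction m using Nat.strong_induction_on with
    | _ m ih =>
      match m with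
      | 0 =>
        simp only [hd, coeff_zero_eq_constantCoeff, h0, beta1]
        simp [beta1]
      | (k + 1) =>
        have H := hsum (k + 2)
        have hred : k + 2 - 1 = k + 1 := rfl
        rw [hred, Finset.sum_range_succ, Nat.choose_self] at H
        simp only [Nat.cast_one, mul_one] at H
        have H2 : ∑ i ∈ range (k + 1), d (i + 1) * ((k + 1).choose i : ℚ) = 0 := by
          linarith [H]
        rw [Finset.sum_range_succ] at H2
        have H3 : ∑ i ∈ range k, d (i + 1) * ((k + 1).choose i : ℚ) = 0 := by
          apply Finset.sum_eq_zero
          intro i hi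
          have hik : i + 1 < k + 1 := Nat.succ_lt_succ (Finset.mem_range.mp hi)
          rw [ih (i + 1) hik, zero_mul]
        rw [H3, zero_add] at H2
        have hne : ((k + 1).choose k : ℚ) ≠ 0 := by
          rw [Nat.choose_succ_self_right]
          exact_mod_cast Nat.succ_ne_zero k
        exact (mul_eq_zero.mp H2).resolve_right hne
  ext i
  have := hzero i
  simp only [hd] at this
  linarith [this]
end

section
/- If h(x) = \sum_{n\ge 0} d_n x^{n+1} in Q[[x]] satisfies h(x/(1-2x)) = h(x) + 2x^3(x-2)/(1-x)^2, then d_0 = 0 and \sum_{n=0}^{m-1} \binom{m}{n} 2^{m-n} d_n = -2m for all m \ge 2. -/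
open PowerSeries Finset

private lemma ring_inverse_eq' {R : Type*} [CommRing R] {a b : R} (hab : a * b = 1) :
    Ring.inverse a = b := by
  have hu : IsUnit a := IsUnit.of_mul_eq_one b hab
  calc Ring.inverse a = Ring.inverse a * (a * b) := by rw [hab, mul_one]
  _ = b := Ring.inverse_mul_cancel_left a b hu

private lemma cconst (n : ℕ) (hn : n ≠ 0) : coeff n (2 : PowerSeries ℚ) = 0 := by
  rw [show (2 : PowerSeries ℚ) = C 2 from (map_ofNat C 2).symm, coeff_C, if_neg hn]

private lemma c2 (f : PowerSeries ℚ) (n : ℕ) :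
    coeff n (2 * f) = 2 * coeff n f := by
  have h : (2 : PowerSeries ℚ) = C 2 := (map_ofNat C 2).symm
  rw [h, coeff_C_mul]

noncomputable def Sps : PowerSeries ℚ := PowerSeries.mk fun k => 2 ^ k

lemma hS : ((1 : PowerSeries ℚ) - 2 * X) * Sps = 1 := by
  have h1 : ((1 : PowerSeries ℚ) - 2 * X) * Sps = Sps - 2 * (X * Sps) := by ring
  rw [h1]
  ext k
  cases k with
  | zero => simp [Sps, c2]
  | succ k => simp [Sps, c2, coeff_succ_X_mul, pow_succ]; ring

lemma hst (n : ℕ) : ∀ k : ℕ, ∑ i ∈ range (k+1), ((n+i).choose i : ℚ) = ((n+1+k).choose k) := by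
  intro k
  induction k with
  | zero => simp
  | succ k ih =>
      rw [Finset.sum_range_succ, ih]
      have h1 : n + (k+1) = n + 1 + k := by omega
      have h2 : (n+1+(k+1)).choose (k+1) = (n+1+k).choose k + (n+1+k).choose (k+1) :=
        Nat.choose_succ_succ (n+1+k) k
      rw [h1, h2]; push_cast; ring

lemma powS (n : ℕ) : ∀ k : ℕ, coeff k (Sps ^ (n+1)) = 2 ^ k * ((n+k).choose k) := by
  induction n with
  | zero => intro k; simp [Sps]
  | succ n ih =>
      intro k
      have h1 : Sps ^ (n+2) = Sps ^ (n+1) * Sps := by ring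
      rw [h1, PowerSeries.coeff_mul, Finset.Nat.sum_antidiagonal_eq_sum_range_succ_mk]
      have h2 : ∀ i ∈ range (k+1),
          coeff i (Sps ^ (n+1)) * coeff (k - i) Sps
            = 2 ^ k * ((n+i).choose i) := by
        intro i hi
        rw [mem_range] at hi
        rw [ih i]
        simp only [Sps, coeff_mk]
        rw [show (2:ℚ)^i * ((n+i).choose i) * 2^(k-i) = 2^(i+(k-i)) * ((n+i).choose i) from by
              rw [pow_add]; ring,
            show i + (k-i) = k from by omega]
      rw [Finset.sum_congr rfl h2, ← Finset.mul_sum, hst n k]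

lemma capow (n j : ℕ) :
    coeff (j + (n+1)) ((X * Sps) ^ (n+1)) = (2 : ℚ) ^ j * ((n+j).choose j) := by
  rw [mul_pow, PowerSeries.coeff_X_pow_mul, powS]

lemma capow0 (n j : ℕ) (h : j < n) : coeff j ((X * Sps) ^ n) = 0 := by
  rw [mul_pow, PowerSeries.coeff_X_pow_mul', if_neg (by omega)]

noncomputable def Tps : PowerSeries ℚ := PowerSeries.mk fun _ => 1

lemma hT : ((1 : PowerSeries ℚ) - X) * Tps = 1 := by
  have h1 : ((1 : PowerSeries ℚ) - X) * Tps = Tps - X * Tps := by ring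
  rw [h1]
  ext k
  cases k with
  | zero => simp [Tps]
  | succ k => simp [Tps, coeff_succ_X_mul]

lemma hT2 : ((1 : PowerSeries ℚ) - X) ^ 2 * (Tps * Tps) = 1 := by
  have h1 : ((1 : PowerSeries ℚ) - X) ^ 2 * (Tps * Tps)
      = (((1 : PowerSeries ℚ) - X) * Tps) * (((1 : PowerSeries ℚ) - X) * Tps) := by ring
  rw [h1, hT, one_mul]

noncomputable def Vps : PowerSeries ℚ := PowerSeries.mk fun k => -4 - 2 * k

lemma hV : ((1 : PowerSeries ℚ) - X) ^ 2 * Vps = 2 * (X - 2) := by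
  have h1 : ((1 : PowerSeries ℚ) - X) ^ 2 * Vps
      = Vps - 2 * (X * Vps) + X ^ 2 * Vps := by ring
  rw [h1]
  ext k
  match k with
  | 0 =>
      have hx2 : coeff 0 ((X:PowerSeries ℚ) ^ 2 * Vps) = 0 := by
        rw [PowerSeries.coeff_X_pow_mul', if_neg (by omega)]
      have hxv : coeff 0 ((X:PowerSeries ℚ) * Vps) = 0 := by
        rw [PowerSeries.coeff_zero_eq_constantCoeff, map_mul, constantCoeff_X, zero_mul]
      have hX0 : coeff 0 (X:PowerSeries ℚ) = 0 := by
        rw [PowerSeries.coeff_zero_eq_constantCoeff, constantCoeff_X]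
      have h20 : coeff 0 (2:PowerSeries ℚ) = 2 := by
        rw [show (2 : PowerSeries ℚ) = C 2 from (map_ofNat C 2).symm, coeff_C,
          if_pos rfl]
      rw [map_add, map_sub, c2, hx2, hxv, c2, map_sub, hX0, h20]
      simp [Vps]
      norm_num
  | 1 =>
      have hx2 : coeff 1 ((X:PowerSeries ℚ) ^ 2 * Vps) = 0 := by
        rw [PowerSeries.coeff_X_pow_mul', if_neg (by omega)]
      have hxv : coeff 1 ((X:PowerSeries ℚ) * Vps) = coeff 0 Vps :=
        coeff_succ_X_mul 0 Vps
      rw [map_add, map_sub, c2, hx2, hxv, c2, map_sub, coeff_one_X, cconst 1 one_ne_zero]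
      simp [Vps]
      norm_num
  | (k+2) =>
      have hx2 : coeff (k + 2) ((X:PowerSeries ℚ) ^ 2 * Vps) = coeff k Vps :=
        PowerSeries.coeff_X_pow_mul Vps 2 k
      have hx1 : coeff (k + 2) ((X:PowerSeries ℚ) * Vps) = coeff (k+1) Vps :=
        coeff_succ_X_mul (k+1) Vps
      have hr : coeff (k + 2) (2 * ((X:PowerSeries ℚ) - 2)) = 0 := by
        rw [c2, map_sub, PowerSeries.coeff_X, if_neg (by omega), cconst (k+2) (by omega)]
        ring
      rw [map_add, map_sub, c2, hx1, hx2, hr]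
      simp [Vps]
      ring

lemma hR : 2 * X ^ 3 * ((X : PowerSeries ℚ) - 2) * Ring.inverse (((1:PowerSeries ℚ) - X) ^ 2)
    = X ^ 3 * Vps := by
  rw [ring_inverse_eq' hT2]
  calc 2 * X ^ 3 * ((X : PowerSeries ℚ) - 2) * (Tps * Tps)
      = X ^ 3 * (2 * (X - 2)) * (Tps * Tps) := by ring
    _ = X ^ 3 * (((1 : PowerSeries ℚ) - X) ^ 2 * Vps) * (Tps * Tps) := by rw [hV]
    _ = X ^ 3 * Vps * (((1 : PowerSeries ℚ) - X) ^ 2 * (Tps * Tps)) := by ring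
    _ = X ^ 3 * Vps := by rw [hT2, mul_one]

theorem coeff_recursion_of_functional_equation (d : ℕ → ℚ)
    (h : substPS (X * Ring.inverse (1 - 2 * X))
          (PowerSeries.mk fun n => if n = 0 then 0 else d (n - 1)) =
        (PowerSeries.mk fun n => if n = 0 then 0 else d (n - 1)) +
          2 * X ^ 3 * (X - 2) * Ring.inverse ((1 - X) ^ 2)) :
    d 0 = 0 ∧ ∀ m : ℕ, 2 ≤ m →
      ∑ n ∈ range m, (m.choose n : ℚ) * 2 ^ (m - n) * d n = -2 * m := by
  rw [ring_inverse_eq' hS] at h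
  have key : ∀ j : ℕ,
      ∑ n ∈ range (j + 1),
        (if n = 0 then 0 else d (n - 1)) * coeff j ((X * Sps) ^ n)
      = (if j = 0 then 0 else d (j - 1)) + coeff j ((X : PowerSeries ℚ) ^ 3 * Vps) := by
    intro j
    have hj := congrArg (coeff j) h
    rw [map_add, hR] at hj
    simpa [substPS, coeff_mk] using hj
  have hd0 : d 0 = 0 := by
    have h2 := key 2
    have e0 : coeff 2 ((X * Sps) ^ 0) = 0 := by simp
    have e1 : coeff 2 ((X * Sps) ^ 1) = 2 := by
      have := capow 0 1
      norm_num at this; simpa using this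
    have e2 : coeff 2 ((X * Sps) ^ 2) = 1 := by
      have := capow 1 0
      norm_num at this; simpa using this
    have e3 : coeff 2 ((X : PowerSeries ℚ) ^ 3 * Vps) = 0 := by
      rw [PowerSeries.coeff_X_pow_mul', if_neg (by omega)]
    rw [Finset.sum_range_succ, Finset.sum_range_succ, Finset.sum_range_succ,
        Finset.range_zero, Finset.sum_empty, e0, e1, e2, e3] at h2
    norm_num at h2
    linarith
  refine ⟨hd0, ?_⟩
  intro m hm
  obtain ⟨k, rfl⟩ : ∃ k, m = k + 2 := ⟨m - 2, by omega⟩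
  set m := k + 2 with hmdef
  have hj := key (m + 1)
  have e3 : coeff (m + 1) ((X : PowerSeries ℚ) ^ 3 * Vps) = (-2 * m : ℚ) := by
    have : coeff (k + 3) ((X : PowerSeries ℚ) ^ 3 * Vps) = coeff k Vps :=
      PowerSeries.coeff_X_pow_mul Vps 3 k
    rw [show m + 1 = k + 3 from by omega, this]
    simp [Vps, hmdef]; push_cast; ring
  rw [e3, if_neg (by omega), Finset.sum_range_succ'] at hj
  have hz1 : (coeff (m+1)) ((X * Sps : PowerSeries ℚ) ^ 0) = 0 := by
    rw [pow_zero, PowerSeries.coeff_one, if_neg (by omega)]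
  simp only [hz1, mul_zero, add_zero] at hj
  have hterm : ∀ i ∈ range (m + 1),
      (if i + 1 = 0 then 0 else d (i + 1 - 1)) * coeff (m + 1) ((X * Sps) ^ (i + 1))
        = d i * (2 ^ (m - i) * (m.choose i : ℚ)) := by
    intro i hi
    rw [mem_range] at hi
    rw [if_neg (by omega)]
    have hcap := capow i (m - i)
    rw [show m - i + (i + 1) = m + 1 from by omega] at hcap
    rw [show i + 1 - 1 = i from rfl, hcap,
        show i + (m - i) = m from by omega, Nat.choose_symm (by omega)]
  rw [Finset.sum_congr rfl hterm, Finset.sum_range_succ] at hj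
  simp only [Nat.sub_self, pow_zero, Nat.choose_self, Nat.cast_one, mul_one, one_mul] at hj
  have hj' : ∑ i ∈ range m, d i * (2 ^ (m - i) * (m.choose i : ℚ)) = -2 * m := by
    have : m + 1 - 1 = m := rfl
    rw [this] at hj
    linarith
  rw [← hj']
  apply Finset.sum_congr rfl
  intro i hi
  ring
end

section
/- For every integer m \ge 2, \sum_{n=0}^{m-1} \binom{m}{n} 2^{m-n} (2^{n+1}-2) B_n = -2m, where B_n are the Bernoulli numbers. -/
open Finset

theorem bernoulli_genocchi_recursion (m : ℕ) (hm : 2 ≤ m) :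
    ∑ n ∈ range m, (m.choose n : ℚ) * 2 ^ (m - n) * ((2 : ℚ) ^ (n + 1) - 2) * bernoulli n =
      -2 * m := by
  have hm1 : m ≠ 1 := by omega
  have heval : (Polynomial.bernoulli m).eval 2 =
      ∑ n ∈ range (m + 1), (m.choose n : ℚ) * 2 ^ (m - n) * bernoulli n := by
    rw [Polynomial.bernoulli, Polynomial.eval_finset_sum]
    apply sum_congr rfl
    intro n _
    rw [Polynomial.eval_monomial]
    ring
  have h2 : (Polynomial.bernoulli m).eval 2 = bernoulli' m + m := by
    have := Polynomial.bernoulli_eval_one_add m 1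
    norm_num at this
    rw [show (2:ℚ) = 1 + 1 by norm_num, Polynomial.bernoulli_eval_one_add,
      Polynomial.bernoulli_eval_one]
    norm_num
  have key : ∑ n ∈ range m, (m.choose n : ℚ) * 2 ^ (m - n) * bernoulli n = m := by
    have := heval
    rw [sum_range_succ, Nat.choose_self, Nat.sub_self, h2,
      bernoulli_eq_bernoulli'_of_ne_one hm1] at this
    simp at this
    linarith
  have hzero : ∑ n ∈ range m, (m.choose n : ℚ) * bernoulli n = 0 := by
    rw [sum_bernoulli, if_neg hm1]
  calc ∑ n ∈ range m, (m.choose n : ℚ) * 2 ^ (m - n) * ((2 : ℚ) ^ (n + 1) - 2) * bernoulli n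
      = ∑ n ∈ range m, (2 ^ (m + 1) * ((m.choose n : ℚ) * bernoulli n)
          - 2 * ((m.choose n : ℚ) * 2 ^ (m - n) * bernoulli n)) := by
        apply sum_congr rfl
        intro n hn
        rw [mem_range] at hn
        have : (2:ℚ) ^ (m - n) * 2 ^ (n + 1) = 2 ^ (m + 1) := by
          rw [← pow_add]
          congr 1
          omega
        linear_combination ((m.choose n : ℚ) * bernoulli n) * this
    _ = -2 * m := by
        rw [sum_sub_distrib, ← mul_sum, ← mul_sum, hzero, key]
        ring
end
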